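/- arXiv:1505.00019 — 10 statements merged into one kernel-verified Lean document; each statement's English description precedes it below -/
import Mathlib

section
/- The uniform morphism φ on {1,2,3} with φ(1)=12321, φ(2)=23132, φ(3)=31213 is cubefree: for every cubefree word W, the image φ(W) is cubefree. -/
/-- A square: a word of the form `x ++ x` with `x` nonempty. -/
def IsSq {α : Type*} (w : List α) : Prop := ∃ x : List α, x ≠ [] ∧ w = x ++ x

/-- A cube: a word of the form `x ++ x ++ x` with `x` nonempty. -/
def IsCube {α : Type*} (w : List α) : Prop := ∃ x : List α, x ≠ [] ∧ w = x ++ x ++ x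

/-- A weak square: a word of the form `a ++ x ++ x ++ a` with `a` a letter. -/
def IsWeakSq {α : Type*} (w : List α) : Prop :=
  ∃ (a : α) (x : List α), w = a :: (x ++ x ++ [a])

/-- An overlap: a word of the form `a ++ x ++ a ++ x ++ a`. -/
def IsOverlap {α : Type*} (w : List α) : Prop :=
  ∃ (a : α) (x : List α), w = a :: (x ++ a :: x ++ [a])

def SqFree {α : Type*} (w : List α) : Prop := ∀ v, v <:+: w → ¬ IsSq v
def CubeFree {α : Type*} (w : List α) : Prop := ∀ v, v <:+: w → ¬ IsCube v
def WeakSqFree {α : Type*} (w : List α) : Prop := ∀ v, v <:+: w → ¬ IsWeakSq v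
def OverlapFree {α : Type*} (w : List α) : Prop := ∀ v, v <:+: w → ¬ IsOverlap v

/-- Applying the morphism determined by letter images `φ` to a finite word. -/
def applyM {α : Type*} (φ : α → List α) (w : List α) : List α := (w.map φ).flatten

def phi : Fin 3 → List (Fin 3) := ![[0,1,2,1,0], [1,2,0,2,1], [2,0,1,0,2]]

/-! ### Basic facts -/

lemma phi_len (a : Fin 3) : (phi a).length = 5 := by fin_cases a <;> rfl

lemma applyM_nil : applyM phi [] = [] := rfl

lemma applyM_cons (a : Fin 3) (w : List (Fin 3)) :
    applyM phi (a :: w) = phi a ++ applyM phi w := rfl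

lemma applyM_length (w : List (Fin 3)) : (applyM phi w).length = 5 * w.length := by
  induction w with
  | nil => rfl
  | cons a w ih => simp [applyM_cons, phi_len, ih]; ring

lemma phi_ne_shift : ∀ (a b c : Fin 3) (r : ℕ), r < 5 → 0 < r →
    phi a ≠ (phi b).drop r ++ (phi c).take r := by decide

lemma phi_last_inj : ∀ a b : Fin 3, (phi a).drop 4 = (phi b).drop 4 → a = b := by decide

/-! ### Synchronization: `phi a` occurs in `applyM phi W` only at multiples of 5 -/

lemma sync : ∀ (W p s : List (Fin 3)) (a : Fin 3),
    p ++ (phi a ++ s) = applyM phi W → p.length % 5 = 0 := by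
  intro W
  induction W with
  | nil =>
    intro p s a h
    rw [applyM_nil, List.append_eq_nil_iff] at h
    have := congrArg List.length h.2
    simp [phi_len] at this
  | cons b W ih =>
    intro p s a h
    rw [applyM_cons] at h
    rcases Nat.lt_or_ge p.length 5 with hp | hp
    · rcases Nat.eq_zero_or_pos p.length with hp0 | hp0
      · omega
      · exfalso
        cases W with
        | nil =>
          have := congrArg List.length h
          simp only [applyM_nil, List.append_nil, List.length_append, phi_len,
            List.length_nil] at this
          omega
        | cons c W' =>
          apply phi_ne_shift a b c p.length hp hp0
          rw [applyM_cons] at h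
          have h1 := congrArg (List.drop p.length) h
          rw [List.drop_left, List.drop_append,
            show p.length - (phi b).length = 0 by rw [phi_len]; omega, List.drop_zero] at h1
          have h2 := congrArg (List.take 5) h1
          rw [List.take_append, List.take_of_length_le (by rw [phi_len]),
            show 5 - (phi a).length = 0 by rw [phi_len], List.take_zero, List.append_nil,
            List.take_append,
            List.take_of_length_le (by rw [List.length_drop, phi_len]; omega),
            show 5 - ((phi b).drop p.length).length = p.length by
              rw [List.length_drop, phi_len]; omega,
            List.take_append,
            show p.length - (phi c).length = 0 by rw [phi_len]; omega,
            List.take_zero, List.append_nil] at h2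
          exact h2
    · obtain ⟨p1, p2, rfl, hp1len⟩ : ∃ p1 p2, p = p1 ++ p2 ∧ p1.length = 5 :=
        ⟨p.take 5, p.drop 5, (List.take_append_drop 5 p).symm, by
          rw [List.length_take]; omega⟩
      rw [List.append_assoc] at h
      obtain ⟨h1, h2⟩ := List.append_inj h (by rw [hp1len, phi_len])
      have := ih p2 s a h2
      rw [List.length_append]
      omega

/-! ### Block extraction -/

lemma block_eq : ∀ (W : List (Fin 3)) (u : ℕ) (h : u < W.length),
    ((applyM phi W).drop (5*u)).take 5 = phi (W[u]'h) := by
  intro W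
  induction W with
  | nil => intro u h; simp at h
  | cons b W ih =>
    intro u h
    cases u with
    | zero => simpa [applyM_cons] using List.take_left' (phi_len b)
    | succ u' =>
      rw [applyM_cons, List.drop_append,
        List.drop_eq_nil_of_le (by rw [phi_len]; omega), List.nil_append,
        show 5*(u'+1) - (phi b).length = 5*u' by rw [phi_len]; ring_nf; omega]
      have h' : u' < W.length := by simpa using h
      simpa using ih u' h'

lemma lastletter_eq (W : List (Fin 3)) (u : ℕ) (h : u < W.length) :
    ((applyM phi W).drop (5*u+4)).take 1 = (phi (W[u]'h)).drop 4 := by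
  have hb := block_eq W u h
  have h1 : (applyM phi W).drop (5*u+4) = ((applyM phi W).drop (5*u)).drop 4 := by
    rw [List.drop_drop]
  rw [h1, ← show ((((applyM phi W).drop (5*u)).take 5).drop 4 =
      (((applyM phi W).drop (5*u)).drop 4).take 1) from List.drop_take .., hb]

/-! ### Decomposition of factors of images -/

lemma infix_append_cases {α : Type*} (v A B : List α) (h : v <:+: A ++ B) :
    v <:+: B ∨ v <:+: A ∨
      ∃ v1 v2, v = v1 ++ v2 ∧ v1 ≠ [] ∧ v2 ≠ [] ∧ v1 <:+ A ∧ v2 <+: B := by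
  obtain ⟨s, t, h⟩ := h
  rw [List.append_assoc] at h
  rcases le_or_gt A.length s.length with hs | hs
  · left
    have h1 := congrArg (List.drop A.length) h
    rw [List.drop_append, show A.length - s.length = 0 by omega,
      List.drop_zero, List.drop_left] at h1
    refine ⟨s.drop A.length, t, ?_⟩
    rw [List.append_assoc, h1]
  · rcases le_or_gt (s.length + v.length) A.length with hv | hv
    · right; left
      have h1 := congrArg (List.take A.length) h
      rw [List.take_left, List.take_append, List.take_append,
        List.take_of_length_le (show s.length ≤ A.length by omega),
        List.take_of_length_le (show v.length ≤ A.length - s.length by omega)] at h1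
      refine ⟨s, t.take (A.length - s.length - v.length), ?_⟩
      rw [List.append_assoc, h1]
    · right; right
      have h1 := congrArg (List.take A.length) h
      rw [List.take_left, List.take_append, List.take_append,
        List.take_of_length_le (show s.length ≤ A.length by omega),
        show A.length - s.length - v.length = 0 by omega, List.take_zero,
        List.append_nil] at h1
      have h2 := congrArg (List.drop A.length) h
      rw [List.drop_left, List.drop_append, List.drop_append,
        List.drop_eq_nil_of_le (show s.length ≤ A.length by omega), List.nil_append,
        show A.length - s.length - v.length = 0 by omega, List.drop_zero] at h2
      refine ⟨v.take (A.length - s.length), v.drop (A.length - s.length),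
        (List.take_append_drop _ v).symm, ?_, ?_, ⟨s, h1⟩, ⟨t, h2⟩⟩
      · intro hh
        have := congrArg List.length hh
        simp only [List.length_take, List.length_nil] at this
        omega
      · intro hh
        have := congrArg List.length hh
        simp only [List.length_drop, List.length_nil] at this
        omega

lemma prefix_decomp : ∀ (W v : List (Fin 3)), v ≠ [] → v <+: applyM phi W →
    ∃ u, u <+: W ∧ 5 * u.length ≤ v.length + 4 ∧ v <+: applyM phi u := by
  intro W
  induction W with
  | nil =>
    intro v hv h
    rw [applyM_nil, List.prefix_nil] at h
    exact absurd h hv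
  | cons c W ih =>
    intro v hv h
    rw [applyM_cons] at h
    have hvt := List.prefix_iff_eq_take.mp h
    rcases le_or_gt v.length 5 with h5 | h5
    · refine ⟨[c], ⟨W, rfl⟩, ?_, ?_⟩
      · have : 0 < v.length := List.length_pos_iff.mpr hv
        simp only [List.length_cons, List.length_nil]; omega
      · rw [List.take_append, show v.length - (phi c).length = 0 by
          rw [phi_len]; omega, List.take_zero, List.append_nil] at hvt
        rw [show applyM phi [c] = phi c by simp [applyM_cons, applyM_nil], hvt]
        exact List.take_prefix _ _
    · have hlen := h.length_le
      rw [List.length_append, phi_len] at hlen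
      rw [List.take_append, List.take_of_length_le (by rw [phi_len]; omega)] at hvt
      set v' := (applyM phi W).take (v.length - (phi c).length) with hv'
      have hv'len : v'.length = v.length - 5 := by
        rw [hv', List.length_take, phi_len]; omega
      have hv'p : v' <+: applyM phi W := List.take_prefix _ _
      have hv'ne : v' ≠ [] := by
        intro hh; rw [hh] at hv'len; simp at hv'len; omega
      obtain ⟨u, hu, hul, hvu⟩ := ih v' hv'ne hv'p
      refine ⟨c :: u, ?_, ?_, ?_⟩
      · exact (List.cons_prefix_cons).mpr ⟨rfl, hu⟩
      · simp only [List.length_cons]; omega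
      · rw [applyM_cons, hvt]
        obtain ⟨r, hr⟩ := hvu
        exact ⟨r, by rw [List.append_assoc, hr]⟩

lemma infix_decomp : ∀ (W v : List (Fin 3)), v ≠ [] → v <:+: applyM phi W →
    ∃ u, u <:+: W ∧ 5 * u.length ≤ v.length + 8 ∧ v <:+: applyM phi u := by
  intro W
  induction W with
  | nil =>
    intro v hv h
    rw [applyM_nil] at h
    exact absurd (List.eq_nil_of_infix_nil h) hv
  | cons c W ih =>
    intro v hv h
    rw [applyM_cons] at h
    rcases infix_append_cases v (phi c) (applyM phi W) h with h1 | h1 | ⟨v1, v2, rfl, h1ne, h2ne, h1s, h2p⟩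
    · obtain ⟨u, hu, hul, hvu⟩ := ih v hv h1
      exact ⟨u, hu.trans (List.infix_cons (List.infix_refl W)), hul, hvu⟩
    · refine ⟨[c], ⟨[], W, rfl⟩, ?_, ?_⟩
      · have : 0 < v.length := List.length_pos_iff.mpr hv
        simp only [List.length_cons, List.length_nil]; omega
      · rw [show applyM phi [c] = phi c by simp [applyM_cons, applyM_nil]]
        exact h1
    · obtain ⟨u, hu, hul, hvu⟩ := prefix_decomp W v2 h2ne h2p
      have h1len : 0 < v1.length := List.length_pos_iff.mpr h1ne
      refine ⟨c :: u, ?_, ?_, ?_⟩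
      · exact ((List.cons_prefix_cons).mpr ⟨rfl, hu⟩).isInfix
      · simp only [List.length_cons, List.length_append]; omega
      · obtain ⟨w1, hw1⟩ := h1s
        obtain ⟨w2, hw2⟩ := hvu
        exact ⟨w1, w2, by rw [applyM_cons, ← hw1, ← hw2]; simp [List.append_assoc]⟩

lemma cubefree_infix {α : Type*} {w u : List α} (hw : CubeFree w) (hu : u <:+: w) :
    CubeFree u := fun v hv => hw v (hv.trans hu)

/-! ### The finite check for small cubes -/

def seg (w : List (Fin 3)) (i m : ℕ) : List (Fin 3) := (w.drop i).take m

/-- prefix cube detector -/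
def srcCubeB (w : List (Fin 3)) : Bool :=
  (List.range (w.length / 3)).any fun mm =>
    seg w 0 (mm+1) == seg w (mm+1) (mm+1) && seg w 0 (mm+1) == seg w (2*(mm+1)) (mm+1)

/-- no cube starting at position < 5 with period ≤ 8 -/
def imgNewOK (v : List (Fin 3)) : Bool :=
  (List.range 8).all fun mm =>
    (List.range 5).all fun i =>
      !(decide (i + 3*(mm+1) ≤ v.length) && (seg v i (mm+1) == seg v (i+(mm+1)) (mm+1))
        && (seg v i (mm+1) == seg v (i+2*(mm+1)) (mm+1)))

def allGood : ℕ → List (Fin 3) → Bool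
  | 0, _ => true
  | k+1, w => [0,1,2].all fun a =>
      if srcCubeB (a :: w) then true
      else imgNewOK (applyM phi (a :: w)) && allGood k (a :: w)

set_option maxRecDepth 100000 in
set_option maxHeartbeats 4000000 in
theorem bigCheck : allGood 6 [] = true := by decide

def NoSmall (v : List (Fin 3)) : Prop := ∀ i m : ℕ, 0 < m → m ≤ 8 → i + 3*m ≤ v.length →
  ¬((v.drop i).take m = (v.drop (i+m)).take m ∧ (v.drop i).take m = (v.drop (i+2*m)).take m)

lemma take3m (w : List (Fin 3)) (m : ℕ) :
    w.take (3*m) = (w.drop 0).take m ++ ((w.drop m).take m ++ (w.drop (2*m)).take m) := by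
  rw [show 3*m = m + (m+m) by ring, List.take_add, List.take_add, List.drop_drop,
    show m + m = 2*m by ring, List.drop_zero]

lemma srcCubeB_sound (w : List (Fin 3)) (h : srcCubeB w = true) : ¬ CubeFree w := by
  rw [srcCubeB, List.any_eq_true] at h
  obtain ⟨mm, hmm, hc⟩ := h
  rw [List.mem_range] at hmm
  rw [Bool.and_eq_true, beq_iff_eq, beq_iff_eq] at hc
  simp only [seg] at hc
  have h3 : 3*(mm+1) ≤ w.length := by omega
  intro hcf
  have hxe : w.take (3*(mm+1)) = (w.drop 0).take (mm+1) ++ (w.drop 0).take (mm+1)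
      ++ (w.drop 0).take (mm+1) := by
    rw [take3m w (mm+1), ← hc.1, ← hc.2, ← List.append_assoc]
  refine hcf ((w.drop 0).take (mm+1) ++ (w.drop 0).take (mm+1) ++ (w.drop 0).take (mm+1))
    (by rw [← hxe]; exact (List.take_prefix _ _).isInfix) ⟨(w.drop 0).take (mm+1), ?_, rfl⟩
  intro hh
  have := congrArg List.length hh
  simp only [List.length_take, List.length_drop, List.length_nil] at this
  omega

lemma imgNewOK_sound (v : List (Fin 3)) (h : imgNewOK v = true) :
    ∀ i m : ℕ, i < 5 → 0 < m → m ≤ 8 → i + 3*m ≤ v.length →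
    ¬((v.drop i).take m = (v.drop (i+m)).take m ∧ (v.drop i).take m = (v.drop (i+2*m)).take m) := by
  rw [imgNewOK, List.all_eq_true] at h
  intro i m hi hm hm8 hlen hc
  have h1 := h (m-1) (List.mem_range.mpr (by omega))
  rw [List.all_eq_true] at h1
  have h2 := h1 i (List.mem_range.mpr hi)
  rw [show m - 1 + 1 = m by omega] at h2
  simp only [seg, Bool.not_eq_true', Bool.and_eq_true, decide_eq_true_eq, beq_iff_eq,
    Bool.and_eq_false_iff, decide_eq_false_iff_not, beq_eq_false_iff_ne, ne_eq] at h2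
  rcases h2 with (h2 | h2) | h2
  · exact h2 hlen
  · exact h2 hc.1
  · exact h2 hc.2

lemma noSmall_cons (a : Fin 3) (w : List (Fin 3))
    (hns : NoSmall (applyM phi w)) (himg : imgNewOK (applyM phi (a :: w)) = true) :
    NoSmall (applyM phi (a :: w)) := by
  intro i m hm hm8 hlen hc
  rcases Nat.lt_or_ge i 5 with hi | hi
  · exact imgNewOK_sound _ himg i m hi hm hm8 hlen hc
  · have hdrop : ∀ j, 5 ≤ j → (applyM phi (a :: w)).drop j = (applyM phi w).drop (j - 5) := by
      intro j hj
      rw [applyM_cons, List.drop_append,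
        List.drop_eq_nil_of_le (by rw [phi_len]; omega), List.nil_append, phi_len]
    have hL : (applyM phi (a :: w)).length = (applyM phi w).length + 5 := by
      rw [applyM_cons, List.length_append, phi_len]; omega
    apply hns (i-5) m hm hm8 (by omega)
    rw [show i - 5 + m = (i + m) - 5 by omega, show i - 5 + 2*m = (i + 2*m) - 5 by omega,
      ← hdrop i hi, ← hdrop (i+m) (by omega), ← hdrop (i+2*m) (by omega)]
    exact hc

lemma allGood_sound : ∀ (k : ℕ) (w : List (Fin 3)), allGood k w = true →
    NoSmall (applyM phi w) →
    ∀ u : List (Fin 3), u.length ≤ k → CubeFree (u ++ w) → NoSmall (applyM phi (u ++ w)) := by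
  intro k
  induction k with
  | zero =>
    intro w hg hns u hu hcf
    have : u = [] := List.eq_nil_of_length_eq_zero (by omega)
    subst this; simpa using hns
  | succ k ih =>
    intro w hg hns u hu hcf
    obtain rfl | ⟨u', a, rfl⟩ := u.eq_nil_or_concat
    · simpa using hns
    · rw [List.concat_eq_append] at *
      have hrw : u' ++ [a] ++ w = u' ++ (a :: w) := by simp
      have hbranch : (if srcCubeB (a :: w) then true
          else imgNewOK (applyM phi (a :: w)) && allGood k (a :: w)) = true := by
        rw [allGood, List.all_eq_true] at hg
        have hmem : ∀ b : Fin 3, b ∈ ([0,1,2] : List (Fin 3)) := by decide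
        exact hg a (hmem a)
      by_cases hsrc : srcCubeB (a :: w) = true
      · exfalso
        exact srcCubeB_sound _ hsrc (cubefree_infix hcf ⟨u', [], by simp⟩)
      · rw [if_neg hsrc, Bool.and_eq_true] at hbranch
        have hns' := noSmall_cons a w hns hbranch.1
        have hcf' : CubeFree (u' ++ (a :: w)) := by rwa [hrw] at hcf
        have hul : u'.length ≤ k := by
          simp only [List.length_append, List.length_cons, List.length_nil] at hu
          omega
        have := ih (a :: w) hbranch.2 hns' u' hul hcf'
        rwa [hrw]

lemma noSmall_nil : NoSmall (applyM phi []) := by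
  intro i m hm _ hlen
  rw [applyM_nil] at hlen
  simp at hlen; omega

lemma small6 (u : List (Fin 3)) (hlen : u.length ≤ 6) (hcf : CubeFree u) :
    NoSmall (applyM phi u) := by
  have := allGood_sound 6 [] bigCheck noSmall_nil u hlen (by simpa using hcf)
  simpa using this

/-! ### Cube gives segment equalities -/

lemma cube_segs {B s' t' x : List (Fin 3)} (hA : s' ++ (x ++ x ++ x) ++ t' = B) :
    (B.drop s'.length).take x.length = x ∧
    (B.drop (s'.length + x.length)).take x.length = x ∧
    (B.drop (s'.length + 2*x.length)).take x.length = x ∧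
    s'.length + 3*x.length ≤ B.length := by
  refine ⟨?_, ?_, ?_, ?_⟩
  · rw [← hA, show s' ++ (x ++ x ++ x) ++ t' = s' ++ (x ++ (x ++ (x ++ t'))) by
      simp [List.append_assoc], List.drop_left]
    exact List.take_left' rfl
  · rw [← hA, show s' ++ (x ++ x ++ x) ++ t' = (s' ++ x) ++ (x ++ (x ++ t')) by
      simp [List.append_assoc], show s'.length + x.length = (s' ++ x).length by
      simp [List.length_append], List.drop_left]
    exact List.take_left' rfl
  · rw [← hA, show s' ++ (x ++ x ++ x) ++ t' = (s' ++ (x ++ x)) ++ (x ++ t') by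
      simp [List.append_assoc], show s'.length + 2*x.length = (s' ++ (x ++ x)).length by
      simp [List.length_append]; ring, List.drop_left]
    exact List.take_left' rfl
  · have := congrArg List.length hA
    simp [List.length_append] at this
    omega

/-! ### Main theorem -/

theorem stmt2 : ∀ W : List (Fin 3), CubeFree W → CubeFree (applyM phi W) := by
  intro W hW v hv hc
  obtain ⟨x, hx, rfl⟩ := hc
  have hnpos : 0 < x.length := List.length_pos_iff.mpr hx
  rcases le_or_gt x.length 8 with hsmall | hbig
  · -- small case
    obtain ⟨u, hu, hul, hvu⟩ := infix_decomp W (x ++ x ++ x) (by simp [hx]) hv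
    have hulen : u.length ≤ 6 := by
      simp only [List.length_append] at hul; omega
    have hns := small6 u hulen (cubefree_infix hW hu)
    obtain ⟨s', t', hA'⟩ := hvu
    obtain ⟨e0, e1, e2, elen⟩ := cube_segs hA'
    exact hns s'.length x.length hnpos hsmall elen
      ⟨e0.trans e1.symm, e0.trans e2.symm⟩
  · -- large case
    obtain ⟨s, t, hA⟩ := hv
    set A := applyM phi W with hAdef
    have hAlen : A.length = 5 * W.length := applyM_length W
    have hsum : s.length + 3*x.length + t.length = A.length := by
      have := congrArg List.length hA
      simp [List.length_append] at this
      omega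
    have hd1 : A.drop s.length = (x ++ x) ++ (x ++ t) := by
      rw [← hA, show s ++ (x ++ x ++ x) ++ t = s ++ ((x ++ x) ++ (x ++ t)) by
        simp [List.append_assoc], List.drop_left]
    have hd2 : A.drop (s.length + x.length) = (x ++ x) ++ t := by
      rw [← hA, show s ++ (x ++ x ++ x) ++ t = (s ++ x) ++ ((x ++ x) ++ t) by
        simp [List.append_assoc], show s.length + x.length = (s ++ x).length by
        simp [List.length_append], List.drop_left]
    have hxx : (x ++ x).length = 2 * x.length := by simp [List.length_append]; ring
    -- periodicity
    have P : ∀ k c, s.length ≤ k → k + c + x.length ≤ s.length + 3*x.length →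
        (A.drop k).take c = (A.drop (k + x.length)).take c := by
      intro k c h1 h2
      have e1 : A.drop k = ((x ++ x).drop (k - s.length)) ++ (x ++ t) := by
        conv_lhs => rw [show k = s.length + (k - s.length) by omega, ← List.drop_drop, hd1]
        rw [List.drop_append, show k - s.length - (x ++ x).length = 0 by
          rw [hxx]; omega, List.drop_zero]
      have e2 : A.drop (k + x.length) = ((x ++ x).drop (k - s.length)) ++ t := by
        conv_lhs => rw [show k + x.length = (s.length + x.length) + (k - s.length) by omega,
          ← List.drop_drop, hd2]
        rw [List.drop_append, show k - s.length - (x ++ x).length = 0 by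
          rw [hxx]; omega, List.drop_zero]
      have hl : ((x ++ x).drop (k - s.length)).length = 2*x.length - (k - s.length) := by
        rw [List.length_drop, hxx]
      have key : ∀ r : List (Fin 3),
          ((x ++ x).drop (k - s.length) ++ r).take c = ((x ++ x).drop (k - s.length)).take c := by
        intro r
        rw [List.take_append, hl,
          show c - (2*x.length - (k - s.length)) = 0 by omega, List.take_zero, List.append_nil]
      rw [e1, e2, key (x ++ t), key t]
    -- aligned block inside first copy
    have hq0ex : ∃ q0 : ℕ, s.length ≤ 5*q0 ∧ 5*q0 ≤ s.length + 4 := by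
      refine ⟨(s.length + 4) / 5, by omega, by omega⟩
    obtain ⟨q0, hq0a, hq0b⟩ := hq0ex
    have hq0W : q0 < W.length := by omega
    have hblk := block_eq W q0 hq0W
    rw [← hAdef] at hblk
    have hper5 := P (5*q0) 5 hq0a (by omega)
    -- phi (W[q0]) occurs at position 5*q0 + x.length
    have hocc : (A.take (5*q0 + x.length)) ++ (phi (W[q0]'hq0W) ++ A.drop (5*q0 + x.length + 5)) = A := by
      conv_rhs => rw [← List.take_append_drop (5*q0 + x.length) A]
      congr 1
      rw [← hblk, hper5]
      have hdd : A.drop (5*q0 + x.length + 5) = (A.drop (5*q0 + x.length)).drop 5 :=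
        List.drop_drop.symm
      rw [hdd]
      exact List.take_append_drop 5 _
    have hsync := sync W _ _ _ hocc
    have hlen5 : (A.take (5*q0 + x.length)).length = 5*q0 + x.length := by
      rw [List.length_take]; omega
    have hn5 : x.length % 5 = 0 := by rw [hlen5] at hsync; omega
    obtain ⟨m, hm5, hm2⟩ : ∃ m, x.length = 5*m ∧ 2 ≤ m := ⟨x.length/5, by omega, by omega⟩
    obtain ⟨q, r, hqr, hr5⟩ : ∃ q r, s.length = 5*q + r ∧ r < 5 :=
      ⟨s.length/5, s.length%5, by omega, by omega⟩
    have hqW : q + 3*m ≤ W.length := by omega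
    have hlet : ∀ (u' v' : ℕ) (hu : u' < W.length) (hv : v' < W.length),
        q ≤ u' → u' < q + 2*m → v' = u' + m → W[u']'hu = W[v']'hv := by
      intro u' v' hu hv h1 h2 h3
      have e := P (5*u'+4) 1 (by omega) (by omega)
      rw [show 5*u'+4 + x.length = 5*v'+4 by omega] at e
      rw [hAdef, lastletter_eq W u' hu, lastletter_eq W v' hv] at e
      exact phi_last_inj _ _ e
    set z := (W.drop q).take m with hz
    have hzlen : z.length = m := by
      rw [hz, List.length_take, List.length_drop]; omega
    have seg1 : (W.drop q).take m = (W.drop (q+m)).take m := by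
      apply List.ext_getElem
      · simp only [List.length_take, List.length_drop]; omega
      · intro j h1 h2
        simp only [List.getElem_take, List.getElem_drop]
        exact hlet (q+j) (q+m+j) (by simp only [List.length_take, List.length_drop] at h1; omega)
          (by simp only [List.length_take, List.length_drop] at h2; omega)
          (by omega) (by simp only [List.length_take, List.length_drop] at h1; omega) (by omega)
    have seg2 : (W.drop (q+m)).take m = (W.drop (q+2*m)).take m := by
      apply List.ext_getElem
      · simp only [List.length_take, List.length_drop]; omega
      · intro j h1 h2
        simp only [List.getElem_take, List.getElem_drop]
        exact hlet (q+m+j) (q+2*m+j) (by simp only [List.length_take, List.length_drop] at h1; omega)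
          (by simp only [List.length_take, List.length_drop] at h2; omega)
          (by omega) (by simp only [List.length_take, List.length_drop] at h1; omega) (by omega)
    have hcube : (W.drop q).take (3*m) = z ++ z ++ z := by
      rw [take3m (W.drop q) m, List.drop_zero, List.drop_drop, List.drop_drop,
        ← seg2, ← seg1, ← hz, List.append_assoc]
    apply hW (z ++ z ++ z) ?_ ⟨z, ?_, rfl⟩
    · rw [← hcube]
      exact ((List.take_prefix _ _).isInfix).trans (List.drop_suffix q W).isInfix
    · intro hh; rw [hh] at hzlen; simp at hzlen; omega
end

section
/- If φ is an overlap-free morphism over a ternary alphabet, then the first letters of the images of the three letters are pairwise distinct, and likewise the last letters of the images of the three letters are pairwise distinct. -/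
/-- The word `baab` is overlap-free whenever `a ≠ b`. -/
lemma of_baab (a b : Fin 3) (h : a ≠ b) : OverlapFree [b,a,a,b] := by
  rintro v ⟨s, t, hst⟩ ⟨c, x, rfl⟩
  have hl := congrArg List.length hst
  simp [List.length_append] at hl
  have hx : x = [] := by
    cases x with
    | nil => rfl
    | cons y ys => simp at hl; omega
  subst hx
  simp at hst
  rcases s with _ | ⟨s0, _ | ⟨s1, s⟩⟩ <;> simp_all
  · exact h (hst.2.1.symm.trans hst.1)
  · exact h (hst.2.1.symm.trans hst.2.2.1)
  · have := congrArg List.length hst.2.2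
    simp at this
    omega

theorem stmt9 (φ : Fin 3 → List (Fin 3)) (hne : ∀ a, φ a ≠ [])
    (hof : ∀ W, OverlapFree W → OverlapFree (applyM φ W)) :
    (∀ a b : Fin 3, a ≠ b → (φ a).headI ≠ (φ b).headI) ∧
    (∀ a b : Fin 3, a ≠ b → (φ a).getLastI ≠ (φ b).getLastI) := by
  constructor
  · intro a b hab hhead
    obtain ⟨c, u, hu⟩ := List.exists_cons_of_ne_nil (hne a)
    obtain ⟨c', v, hv⟩ := List.exists_cons_of_ne_nil (hne b)
    have hc : c' = c := by rw [hu, hv] at hhead; simpa using hhead.symm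
    rw [hc] at hv
    refine hof [b,a,a,b] (of_baab a b hab) (c :: (u ++ c :: u ++ [c]))
      ⟨c :: v, v, ?_⟩ ⟨c, u, rfl⟩
    simp [applyM, hu, hv]
  · intro a b hab hlast
    obtain ⟨u, c, hu⟩ := (List.eq_nil_or_concat (φ a)).resolve_left (hne a)
    obtain ⟨v, c', hv⟩ := (List.eq_nil_or_concat (φ b)).resolve_left (hne b)
    have hc : c' = c := by
      rw [hu, hv] at hlast
      simpa [List.getLastI_eq_getLast?] using hlast.symm
    rw [hc] at hv
    simp only [List.concat_eq_append] at hu hv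
    refine hof [b,a,a,b] (of_baab a b hab) (c :: (u ++ c :: u ++ [c]))
      ⟨v, v ++ [c], ?_⟩ ⟨c, u, rfl⟩
    simp [applyM, hu, hv]
end

section
/- If φ is a morphism over a ternary alphabet that is weakly squarefree, cubefree and overlap-free, with nonempty letter images and with each letter's image beginning with a distinct first letter, then for every letter a the first letter of φ(a) equals the last letter of φ(a). -/
theorem stmt10 (φ : Fin 3 → List (Fin 3)) (hne : ∀ a, φ a ≠ [])
    (hwsf : ∀ W, WeakSqFree W → WeakSqFree (applyM φ W))
    (hcf : ∀ W, CubeFree W → CubeFree (applyM φ W))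
    (hof : ∀ W, OverlapFree W → OverlapFree (applyM φ W))
    (hfirst : ∀ a b : Fin 3, a ≠ b → (φ a).headI ≠ (φ b).headI) :
    ∀ a : Fin 3, (φ a).headI = (φ a).getLastI := by
  intro a
  by_contra hfl
  set l := (φ a).getLastI with hl
  -- heads are injective, hence surjective
  have hinj : Function.Injective (fun c : Fin 3 => (φ c).headI) := by
    intro x y hxy
    by_contra hxy'
    exact hfirst x y hxy' hxy
  obtain ⟨b, hb⟩ := Finite.surjective_of_injective hinj l
  simp only at hb
  have hba : b ≠ a := by
    rintro rfl; exact hfl hb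
  -- [a, b] is weakly squarefree
  have hW : WeakSqFree [a, b] := by
    rintro v ⟨s, t, hst⟩ ⟨c, x, rfl⟩
    have hlen := congrArg List.length hst
    simp only [List.length_append, List.length_cons, List.length_nil] at hlen
    obtain ⟨hx, hs, ht⟩ : x.length = 0 ∧ s.length = 0 ∧ t.length = 0 := by omega
    rw [List.length_eq_zero_iff] at hx hs ht
    subst hx; subst hs; subst ht
    simp at hst
    exact hba.symm (hst.1.symm.trans hst.2)
  have himg := hwsf [a, b] hW
  obtain ⟨u, c, hu⟩ := ((φ a).eq_nil_or_concat').resolve_left (hne a)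
  have hc : c = l := by
    rw [hl, hu]; simp [List.getLastI_eq_getLast?]
  subst hc
  obtain ⟨y, ys, hφb⟩ : ∃ y ys, φ b = y :: ys := by
    cases h : φ b with
    | nil => exact absurd h (hne b)
    | cons y ys => exact ⟨y, ys, rfl⟩
  have hy : y = l := by rw [← hb, hφb]; rfl
  subst hy
  have hinf : [l, l] <:+: applyM φ [a, b] := by
    refine ⟨u, ys, ?_⟩
    show u ++ [l, l] ++ ys = ([a, b].map φ).flatten
    simp [hu, hφb]
  exact himg [l, l] hinf ⟨l, [], rfl⟩
end

section
/- There is no 2-uniform overlap-free morphism over the ternary alphabet {1,2,3}. -/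
def isOv (w : List (Fin 3)) : Bool :=
  match w with
  | [] => false
  | a :: t =>
    let x := t.take ((t.length - 2) / 2)
    decide (a :: t = a :: (x ++ a :: x ++ [a]))

lemma isOv_iff (w : List (Fin 3)) : isOv w = true ↔ IsOverlap w := by
  constructor
  · intro h
    cases w with
    | nil => simp [isOv] at h
    | cons a t =>
      simp only [isOv, decide_eq_true_eq] at h
      exact ⟨a, _, h⟩
  · rintro ⟨a, x, rfl⟩
    simp only [isOv, decide_eq_true_eq]
    have hl : (x ++ a :: x ++ [a]).length = 2 * x.length + 2 := by
      simp; ring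
    rw [hl]
    have : (2 * x.length + 2 - 2) / 2 = x.length := by omega
    rw [this]
    have : (x ++ a :: x ++ [a]).take x.length = x := by
      rw [List.append_assoc, List.take_append_of_le_length (le_refl _), List.take_length]
    rw [this]

def hasOv (w : List (Fin 3)) : Bool :=
  w.tails.any (fun t => t.inits.any isOv)

lemma hasOv_iff (w : List (Fin 3)) : hasOv w = false ↔ OverlapFree w := by
  constructor
  · intro h v hinf hov
    rw [List.infix_iff_prefix_suffix] at hinf
    obtain ⟨t, hp, hs⟩ := hinf
    have : hasOv w = true := by
      simp only [hasOv, List.any_eq_true]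
      exact ⟨t, (List.mem_tails _ _).2 hs, v, (List.mem_inits _ _).2 hp, (isOv_iff v).2 hov⟩
    rw [h] at this; exact absurd this (by simp)
  · intro h
    by_contra hc
    rw [Bool.not_eq_false] at hc
    simp only [hasOv, List.any_eq_true] at hc
    obtain ⟨t, ht, v, hv, hov⟩ := hc
    exact h v (List.infix_iff_prefix_suffix.2 ⟨t, (List.mem_inits _ _).1 hv, (List.mem_tails _ _).1 ht⟩)
      ((isOv_iff v).1 hov)

def tests : List (List (Fin 3)) :=
  [[0,0],[0,0,1],[0,0,2],[0,1],[0,1,1],[0,1,2,0],[0,2],[0,2,1,0],[0,2,2],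
   [1,0],[1,1],[1,1,2],[1,2],[1,2,2],[2,0],[2,1],[2,2]]

set_option maxRecDepth 100000 in
lemma tests_free : ∀ W ∈ tests, hasOv W = false := by decide

set_option maxRecDepth 1000000 in
set_option maxHeartbeats 4000000 in
lemma key6 : ∀ a b c d p q : Fin 3,
    ∃ W ∈ tests, hasOv (applyM (fun i : Fin 3 =>
      if i = 0 then [a, b] else if i = 1 then [c, d] else [p, q]) W) = true := by decide

lemma key : ∀ e : Fin 3 → Fin 3 × Fin 3,
    ∃ W ∈ tests, hasOv (applyM (fun a => [(e a).1, (e a).2]) W) = true := by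
  intro e
  obtain ⟨W, hW, h⟩ := key6 (e 0).1 (e 0).2 (e 1).1 (e 1).2 (e 2).1 (e 2).2
  refine ⟨W, hW, ?_⟩
  convert h using 3
  funext i
  fin_cases i <;> simp

theorem stmt11 : ¬ ∃ φ : Fin 3 → List (Fin 3),
    (∀ a, (φ a).length = 2) ∧
    (∀ W, OverlapFree W → OverlapFree (applyM φ W)) := by
  rintro ⟨φ, hlen, hpres⟩
  set e : Fin 3 → Fin 3 × Fin 3 := fun a => ((φ a).headI, (φ a).tail.headI) with he
  have hφ : φ = fun a => [(e a).1, (e a).2] := by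
    funext a
    have h := hlen a
    rcases hl : φ a with _ | ⟨b, _ | ⟨c, _ | ⟨d, t⟩⟩⟩ <;> simp_all [he]
  obtain ⟨W, hW, hbad⟩ := key e
  have hfree : OverlapFree W := (hasOv_iff W).1 (tests_free W hW)
  have := hpres W hfree
  rw [← hasOv_iff] at this
  rw [hφ] at this
  rw [hbad] at this
  exact absurd this (by simp)
end

section
/- There is no 4-uniform morphism over the ternary alphabet {1,2,3} that is simultaneously weakly squarefree, cubefree, overlap-free and has a fixed point. -/
section dec

variable {α : Type*} [DecidableEq α]

/-- detects a weak square `a x x a` (with `|x| = k`) as a prefix -/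
def wsAt : List α → Nat → Bool
  | a :: r, k => r.take k == (r.drop k).take k && (r.drop (k + k)).head? == some a
  | [], _ => false

/-- detects an overlap `a x a x a` (with `|x| = k`) as a prefix -/
def ovAt : List α → Nat → Bool
  | a :: r, k =>
      (r.drop k).head? == some a && r.take k == (r.drop k).tail.take k &&
        ((r.drop k).tail.drop k).head? == some a
  | [], _ => false

/-- detects a cube `x x x` (with `|x| = k`) as a prefix; meant for `k ≥ 1` -/
def cbAt (t : List α) (k : Nat) : Bool :=
  t.take k == (t.drop k).take k && t.take k == ((t.drop k).drop k).take k &&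
    decide (k ≤ ((t.drop k).drop k).length)

theorem wsAt_sound (t : List α) (k : ℕ) (h : wsAt t k = true) :
    ∃ u, u <+: t ∧ IsWeakSq u := by
  cases t with
  | nil => simp [wsAt] at h
  | cons a r =>
    rw [wsAt, Bool.and_eq_true, beq_iff_eq, beq_iff_eq] at h
    obtain ⟨h1, h2⟩ := h
    obtain ⟨s, hs⟩ := List.head?_eq_some_iff.1 h2
    refine ⟨a :: (r.take k ++ r.take k ++ [a]), ⟨s, ?_⟩, a, r.take k, rfl⟩
    have e : r = r.take k ++ ((r.drop k).take k ++ (r.drop k).drop k) := by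
      rw [List.take_append_drop, List.take_append_drop]
    rw [List.drop_drop, ← h1, hs] at e
    conv_rhs => rw [e]
    simp only [List.cons_append, List.append_assoc, List.singleton_append,
      List.nil_append]

theorem ovAt_sound (t : List α) (k : ℕ) (h : ovAt t k = true) :
    ∃ u, u <+: t ∧ IsOverlap u := by
  cases t with
  | nil => simp [ovAt] at h
  | cons a r =>
    rw [ovAt, Bool.and_eq_true, Bool.and_eq_true, beq_iff_eq, beq_iff_eq, beq_iff_eq] at h
    obtain ⟨⟨h1, h2⟩, h3⟩ := h
    obtain ⟨s1, hs1⟩ := List.head?_eq_some_iff.1 h1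
    have htail : (r.drop k).tail = s1 := by rw [hs1]; rfl
    rw [htail] at h2 h3
    obtain ⟨s2, hs2⟩ := List.head?_eq_some_iff.1 h3
    refine ⟨a :: (r.take k ++ a :: r.take k ++ [a]), ⟨s2, ?_⟩, a, r.take k, rfl⟩
    have e2 : s1 = r.take k ++ (a :: s2) := by
      conv_lhs => rw [← List.take_append_drop k s1]
      rw [← h2, hs2]
    have e : r = r.take k ++ (a :: (r.take k ++ a :: s2)) := by
      conv_lhs => rw [← List.take_append_drop k r]
      rw [hs1, e2]
    conv_rhs => rw [e]
    simp only [List.cons_append, List.append_assoc, List.singleton_append,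
      List.nil_append]

theorem cbAt_sound (t : List α) (k : ℕ) (hk : 0 < k) (h : cbAt t k = true) :
    ∃ u, u <+: t ∧ IsCube u := by
  rw [cbAt, Bool.and_eq_true, Bool.and_eq_true, beq_iff_eq, beq_iff_eq,
    decide_eq_true_eq] at h
  obtain ⟨⟨h1, h2⟩, h3⟩ := h
  refine ⟨t.take k ++ t.take k ++ t.take k, ⟨((t.drop k).drop k).drop k, ?_⟩, t.take k, ?_, rfl⟩
  · have e : t = t.take k ++ ((t.drop k).take k ++
        (((t.drop k).drop k).take k ++ ((t.drop k).drop k).drop k)) := by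
      rw [List.take_append_drop, List.take_append_drop, List.take_append_drop]
    rw [← h1, ← h2] at e
    conv_rhs => rw [e]
    simp only [List.append_assoc]
  · intro hnil
    have hlen := congrArg List.length hnil
    simp only [List.length_take, List.length_nil] at hlen
    simp only [List.length_drop] at h3
    rcases Nat.min_eq_zero_iff.mp hlen with h | h <;> omega

/-- no two equal adjacent letters -/
def adjOK : List α → Bool
  | a :: b :: t => a ≠ b && adjOK (b :: t)
  | _ => true

/-- the combined pattern scanner -/
def tailCk (t : List α) : Bool :=
  ([0, 1, 2, 3, 4, 5] : List ℕ).all fun k => !wsAt t k && !ovAt t k && !cbAt t (k + 1)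

def ck (w : List α) : Bool := w.tails.all tailCk

theorem wsf_adj : ∀ {w : List α}, WeakSqFree w → adjOK w = true := by
  intro w
  induction w with
  | nil => intro _; rfl
  | cons a t ih =>
    intro h
    cases t with
    | nil => rfl
    | cons b t' =>
      have hab : a ≠ b := by
        intro hab
        subst hab
        exact h [a, a] ⟨[], t', rfl⟩ ⟨a, [], rfl⟩
      have ht : WeakSqFree (b :: t') :=
        fun v hv => h v (hv.trans (List.suffix_cons a _).isInfix)
      show (decide (a ≠ b) && adjOK (b :: t')) = true
      simp [hab, ih ht]

theorem ck_of_free {w : List α} (h1 : WeakSqFree w) (h2 : CubeFree w)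
    (h3 : OverlapFree w) : ck w = true := by
  rw [ck, List.all_eq_true]
  intro t ht
  have hinf : ∀ u, u <+: t → u <:+: w := fun u hu =>
    List.infix_iff_prefix_suffix.2 ⟨t, hu, (List.mem_tails _ _).1 ht⟩
  rw [tailCk, List.all_eq_true]
  intro k _
  simp only [Bool.and_eq_true, Bool.not_eq_true']
  refine ⟨⟨?_, ?_⟩, ?_⟩
  · by_contra hc
    obtain ⟨u, hu, hbad⟩ := wsAt_sound t k (by simpa using hc)
    exact h1 u (hinf u hu) hbad
  · by_contra hc
    obtain ⟨u, hu, hbad⟩ := ovAt_sound t k (by simpa using hc)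
    exact h3 u (hinf u hu) hbad
  · by_contra hc
    obtain ⟨u, hu, hbad⟩ := cbAt_sound t (k + 1) (Nat.succ_pos k) (by simpa using hc)
    exact h2 u (hinf u hu) hbad

end dec

section decInst

variable {α : Type*} [DecidableEq α]

instance (w : List α) : Decidable (IsWeakSq w) :=
  decidable_of_iff
    (∃ a ∈ w.take 1, ∃ x ∈ w.tail.inits, w = a :: (x ++ x ++ [a])) (by
    constructor
    · rintro ⟨a, -, x, -, h⟩; exact ⟨a, x, h⟩
    · rintro ⟨a, x, rfl⟩
      exact ⟨a, by simp, x, (List.mem_inits _ _).2 ⟨x ++ [a], by simp⟩, rfl⟩)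

instance (w : List α) : Decidable (IsCube w) :=
  decidable_of_iff (∃ x ∈ w.inits, x ≠ [] ∧ w = x ++ x ++ x) (by
    constructor
    · rintro ⟨x, -, h⟩; exact ⟨x, h⟩
    · rintro ⟨x, hx, rfl⟩
      exact ⟨x, (List.mem_inits _ _).2 ⟨x ++ x, by simp⟩, hx, rfl⟩)

instance (w : List α) : Decidable (IsOverlap w) :=
  decidable_of_iff
    (∃ a ∈ w.take 1, ∃ x ∈ w.tail.inits, w = a :: (x ++ a :: x ++ [a])) (by
    constructor
    · rintro ⟨a, -, x, -, h⟩; exact ⟨a, x, h⟩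
    · rintro ⟨a, x, rfl⟩
      exact ⟨a, by simp, x, (List.mem_inits _ _).2 ⟨a :: x ++ [a], by simp⟩, rfl⟩)

theorem freeFB {P : List α → Prop} {w : List α} :
    (∀ v, v <:+: w → ¬ P v) ↔ ∀ t ∈ w.tails, ∀ u ∈ t.inits, ¬ P u := by
  constructor
  · intro h t ht u hu
    exact h u (List.infix_iff_prefix_suffix.2
      ⟨t, (List.mem_inits _ _).1 hu, (List.mem_tails _ _).1 ht⟩)
  · intro h v hv
    obtain ⟨t, h1, h2⟩ := List.infix_iff_prefix_suffix.1 hv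
    exact h t ((List.mem_tails _ _).2 h2) v ((List.mem_inits _ _).2 h1)

instance (w : List α) : Decidable (WeakSqFree w) := decidable_of_iff _ freeFB.symm
instance (w : List α) : Decidable (CubeFree w) := decidable_of_iff _ freeFB.symm
instance (w : List α) : Decidable (OverlapFree w) := decidable_of_iff _ freeFB.symm

end decInst

def goodW : List (List (Fin 3)) :=
  [[0,1,0,1], [0,1,0,2], [0,1,2,0], [0,1,2,1], [0,2,0,1], [0,2,0,2], [0,2,1,0], [0,2,1,2],
   [1,0,1,0], [1,0,1,2], [1,0,2,0], [1,0,2,1], [1,2,0,1], [1,2,0,2], [1,2,1,0], [1,2,1,2],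
   [2,0,1,0], [2,0,1,2], [2,0,2,0], [2,0,2,1], [2,1,0,1], [2,1,0,2], [2,1,2,0], [2,1,2,1]]

theorem mem_goodW (w : List (Fin 3)) (h4 : w.length = 4) (h : adjOK w = true) :
    w ∈ goodW := by
  rcases w with _ | ⟨a, _ | ⟨b, _ | ⟨c, _ | ⟨d, _ | ⟨e, t⟩⟩⟩⟩⟩ <;>
    simp only [List.length_cons, List.length_nil] at h4 <;>
    try (exfalso; omega)
  revert h
  revert a b c d
  decide

def gp : List (List (Fin 3) × List (Fin 3)) :=
  [([0,1,0,1], [2,1,0,2]), ([0,1,0,2], [1,0,1,2]), ([0,1,2,0], [1,0,2,1]),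
   ([0,1,2,0], [2,1,0,2]), ([0,1,2,1], [0,2,1,2]), ([0,2,0,1], [2,0,2,1]),
   ([0,2,0,2], [1,2,0,1]), ([0,2,1,0], [1,2,0,1]), ([0,2,1,0], [2,0,1,2]),
   ([0,2,1,2], [0,1,2,1]), ([1,0,1,0], [2,0,1,2]), ([1,0,1,2], [0,1,0,2]),
   ([1,0,2,0], [1,2,0,2]), ([1,0,2,1], [0,1,2,0]), ([1,0,2,1], [2,0,1,2]),
   ([1,2,0,1], [0,2,1,0]), ([1,2,0,1], [2,1,0,2]), ([1,2,0,2], [1,0,2,0]),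
   ([1,2,1,0], [2,1,2,0]), ([1,2,1,2], [0,2,1,0]), ([2,0,1,0], [2,1,0,1]),
   ([2,0,1,2], [0,2,1,0]), ([2,0,1,2], [1,0,2,1]), ([2,0,2,0], [1,0,2,1]),
   ([2,0,2,1], [0,2,0,1]), ([2,1,0,1], [2,0,1,0]), ([2,1,0,2], [0,1,2,0]),
   ([2,1,0,2], [1,2,0,1]), ([2,1,2,0], [1,2,1,0]), ([2,1,2,1], [0,1,2,0])]

set_option maxHeartbeats 8000000 in
theorem lemA : ∀ u ∈ goodW, ∀ v ∈ goodW,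
    ck (u ++ (v ++ u)) = true → (u, v) ∈ gp := by
  decide

set_option synthInstance.maxHeartbeats 400000 in
set_option synthInstance.maxSize 1024 in
theorem coreB : ∀ q ∈ gp, ∀ p2 ∈ goodW,
    (q.1.headI = (0 : Fin 3) ∨ q.2.headI = 1 ∨ p2.headI = 2) →
    ¬ ((q.2, q.1) ∈ gp ∧ (q.1, p2) ∈ gp ∧ (p2, q.1) ∈ gp ∧
       (q.2, p2) ∈ gp ∧ (p2, q.2) ∈ gp) := by
  decide

theorem stmt13 : ¬ ∃ φ : Fin 3 → List (Fin 3),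
    (∀ a, (φ a).length = 4) ∧
    (∀ W, WeakSqFree W → WeakSqFree (applyM φ W)) ∧
    (∀ W, CubeFree W → CubeFree (applyM φ W)) ∧
    (∀ W, OverlapFree W → OverlapFree (applyM φ W)) ∧
    (∃ (a : Fin 3) (V : List (Fin 3)), φ a = a :: V) := by
  rintro ⟨φ, hlen, hW, hC, hO, a, V, ha⟩
  have hsingle : ∀ i : Fin 3, WeakSqFree [i] := by decide
  have hphi : ∀ i : Fin 3, WeakSqFree (φ i) := by
    intro i
    have := hW [i] (hsingle i)
    simpa [applyM] using this
  have g : ∀ i : Fin 3, φ i ∈ goodW := fun i => mem_goodW _ (hlen i) (wsf_adj (hphi i))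
  have key : (φ a).headI = a := by rw [ha]; rfl
  have cond : (φ 0).headI = (0 : Fin 3) ∨ (φ 1).headI = 1 ∨ (φ 2).headI = 2 := by
    obtain ⟨n, hn⟩ := a
    interval_cases n
    · exact Or.inl key
    · exact Or.inr (Or.inl key)
    · exact Or.inr (Or.inr key)
  have eapp : ∀ i j k : Fin 3, applyM φ [i, j, k] = φ i ++ (φ j ++ φ k) := by
    intro i j k; simp [applyM]
  have freeT : ∀ i j : Fin 3, i ≠ j → WeakSqFree [i, j, i] ∧ CubeFree [i, j, i] ∧
      OverlapFree [i, j, i] := by decide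
  have gpmem : ∀ i j : Fin 3, i ≠ j → (φ i, φ j) ∈ gp := by
    intro i j hij
    obtain ⟨f1, f2, f3⟩ := freeT i j hij
    exact lemA (φ i) (g i) (φ j) (g j)
      (ck_of_free (eapp i j i ▸ hW _ f1) (eapp i j i ▸ hC _ f2) (eapp i j i ▸ hO _ f3))
  exact coreB (φ 0, φ 1) (gpmem 0 1 (by decide)) (φ 2) (g 2) cond
    ⟨gpmem 1 0 (by decide), gpmem 0 2 (by decide), gpmem 2 0 (by decide),
     gpmem 1 2 (by decide), gpmem 2 1 (by decide)⟩
end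

section
/- Over the binary alphabet {0,1}, every word of length at least 6 contains a cube or a weak square. Equivalently, there are no cubefree and weakly squarefree binary words of length greater than 5. -/
def cubeB (v : List (Fin 2)) : Bool :=
  let x := v.take (v.length / 3); decide (x ≠ [] ∧ v = x ++ x ++ x)

def wsqB : List (Fin 2) → Bool
  | [] => false
  | a :: t => let x := t.take ((t.length - 1) / 2); decide (t = x ++ x ++ [a])

lemma cubeB_sound {v : List (Fin 2)} (h : cubeB v = true) : IsCube v := by
  have := of_decide_eq_true h
  exact ⟨_, this⟩

lemma wsqB_sound {v : List (Fin 2)} (h : wsqB v = true) : IsWeakSq v := by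
  match v, h with
  | a :: t, h =>
    have := of_decide_eq_true h
    exact ⟨a, _, by rw [this]⟩

lemma key_s14 : ∀ a b c d e f : Fin 2,
    ((([a,b,c,d,e,f] : List (Fin 2)).tails.flatMap List.inits).any
      (fun v => cubeB v || wsqB v)) = true := by decide

theorem stmt14 : ∀ w : List (Fin 2), 6 ≤ w.length →
    ∃ v, v <:+: w ∧ (IsCube v ∨ IsWeakSq v) := by
  intro w hw
  set u := w.take 6 with hu
  have hlen : u.length = 6 := by rw [hu, List.length_take]; omega
  obtain ⟨a, t1, h1⟩ := List.exists_cons_of_ne_nil (show u ≠ [] by intro h; rw [h] at hlen; exact absurd hlen (by decide))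
  have hl1 : t1.length = 5 := by simpa [h1] using hlen
  obtain ⟨b, t2, h2⟩ := List.exists_cons_of_ne_nil (show t1 ≠ [] by intro h; simp [h] at hl1)
  have hl2 : t2.length = 4 := by simp [h2] at hl1; omega
  obtain ⟨c, t3, h3⟩ := List.exists_cons_of_ne_nil (show t2 ≠ [] by intro h; simp [h] at hl2)
  have hl3 : t3.length = 3 := by simp [h3] at hl2; omega
  obtain ⟨d, t4, h4⟩ := List.exists_cons_of_ne_nil (show t3 ≠ [] by intro h; simp [h] at hl3)
  have hl4 : t4.length = 2 := by simp [h4] at hl3; omega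
  obtain ⟨e, t5, h5⟩ := List.exists_cons_of_ne_nil (show t4 ≠ [] by intro h; simp [h] at hl4)
  have hl5 : t5.length = 1 := by simp [h5] at hl4; omega
  obtain ⟨f, t6, h6⟩ := List.exists_cons_of_ne_nil (show t5 ≠ [] by intro h; simp [h] at hl5)
  have hl6 : t6 = [] := by simp [h6] at hl5; exact hl5
  have hueq : u = [a,b,c,d,e,f] := by rw [h1, h2, h3, h4, h5, h6, hl6]
  have hany := key_s14 a b c d e f
  rw [List.any_eq_true] at hany
  obtain ⟨v, hv, hbv⟩ := hany
  rw [List.mem_flatMap] at hv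
  obtain ⟨t, ht, hvt⟩ := hv
  have hinf : v <:+: u := by
    rw [hueq]
    exact ((List.mem_inits _ _).mp hvt).isInfix.trans ((List.mem_tails _ _).mp ht).isInfix
  refine ⟨v, hinf.trans ((List.take_prefix 6 w).isInfix), ?_⟩
  rcases Bool.or_eq_true_iff.mp hbv with h | h
  · exact Or.inl (cubeB_sound h)
  · exact Or.inr (wsqB_sound h)
end

section
/- There is no morphism over the binary alphabet {0,1} that is weakly squarefree, cubefree, overlap-free, and has an infinite fixed point obtained by iterating from a letter (i.e., a morphism φ with |φ(a)| ≥ 2 and φ(a) starting with a for a letter a). -/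
def isWSqB (w : List (Fin 2)) : Bool :=
  match w with
  | [] => false
  | c :: s => decide (s = s.take ((s.length - 1) / 2) ++ s.take ((s.length - 1) / 2) ++ [c])

def isCubeB (w : List (Fin 2)) : Bool :=
  !w.isEmpty && decide (w = w.take (w.length / 3) ++ w.take (w.length / 3) ++ w.take (w.length / 3))

lemma isWeakSq_iff (w : List (Fin 2)) : IsWeakSq w ↔ isWSqB w = true := by
  constructor
  · rintro ⟨c, x, rfl⟩
    have hlen : ((x ++ x ++ [c]).length - 1) / 2 = x.length := by
      simp [List.length_append]; omega
    have ht : (x ++ x ++ [c]).take x.length = x := by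
      rw [List.append_assoc]; exact List.take_left
    simp only [isWSqB, decide_eq_true_eq]
    rw [hlen, ht]
  · cases w with
    | nil => simp [isWSqB]
    | cons c s =>
      intro h
      simp only [isWSqB, decide_eq_true_eq] at h
      exact ⟨c, s.take ((s.length - 1) / 2), by rw [← h]⟩

lemma isCube_iff (w : List (Fin 2)) : IsCube w ↔ isCubeB w = true := by
  constructor
  · rintro ⟨x, hx, rfl⟩
    have hlen : (x ++ x ++ x).length / 3 = x.length := by
      simp [List.length_append]; omega
    have ht : (x ++ x ++ x).take x.length = x := by
      rw [List.append_assoc]; exact List.take_left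
    simp only [isCubeB, Bool.and_eq_true, Bool.not_eq_true', decide_eq_true_eq]
    refine ⟨by simpa using hx, ?_⟩
    rw [hlen, ht]
  · intro h
    simp only [isCubeB, Bool.and_eq_true, decide_eq_true_eq] at h
    obtain ⟨hne, heq⟩ := h
    have hw : w ≠ [] := by simpa using hne
    refine ⟨w.take (w.length / 3), ?_, heq⟩
    intro hnil
    rw [hnil] at heq
    simp at heq
    exact hw heq

def wsfB (w : List (Fin 2)) : Bool := w.tails.all fun t => t.inits.all fun v => !isWSqB v
def cfB (w : List (Fin 2)) : Bool := w.tails.all fun t => t.inits.all fun v => !isCubeB v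

lemma wsf_iff (w : List (Fin 2)) : WeakSqFree w ↔ wsfB w = true := by
  constructor
  · intro h
    simp only [wsfB, List.all_eq_true, List.mem_tails, List.mem_inits, Bool.not_eq_true']
    intro t ht v hv
    have := h v (hv.isInfix.trans ht.isInfix)
    rw [isWeakSq_iff] at this
    simpa using this
  · intro h v hv hsq
    obtain ⟨t, hvt, htw⟩ := List.infix_iff_prefix_suffix.mp hv
    simp only [wsfB, List.all_eq_true, List.mem_tails, List.mem_inits, Bool.not_eq_true'] at h
    have := h t htw v hvt
    rw [isWeakSq_iff] at hsq
    simp [hsq] at this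

lemma cf_iff (w : List (Fin 2)) : CubeFree w ↔ cfB w = true := by
  constructor
  · intro h
    simp only [cfB, List.all_eq_true, List.mem_tails, List.mem_inits, Bool.not_eq_true']
    intro t ht v hv
    have := h v (hv.isInfix.trans ht.isInfix)
    rw [isCube_iff] at this
    simpa using this
  · intro h v hv hsq
    obtain ⟨t, hvt, htw⟩ := List.infix_iff_prefix_suffix.mp hv
    simp only [cfB, List.all_eq_true, List.mem_tails, List.mem_inits, Bool.not_eq_true'] at h
    have := h t htw v hvt
    rw [isCube_iff] at hsq
    simp [hsq] at this

lemma six : ∀ c0 c1 c2 c3 c4 c5 : Fin 2,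
    ¬ (wsfB [c0,c1,c2,c3,c4,c5] = true ∧ cfB [c0,c1,c2,c3,c4,c5] = true) := by decide

lemma wsf_infix {w u : List (Fin 2)} (h : WeakSqFree w) (hu : u <:+: w) : WeakSqFree u :=
  fun v hv => h v (hv.trans hu)

lemma cf_infix {w u : List (Fin 2)} (h : CubeFree w) (hu : u <:+: w) : CubeFree u :=
  fun v hv => h v (hv.trans hu)

lemma len_le5 {w : List (Fin 2)} (h1 : WeakSqFree w) (h2 : CubeFree w) : w.length ≤ 5 := by
  by_contra h
  push_neg at h
  have hui : w.take 6 <:+: w := (List.take_prefix 6 w).isInfix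
  have h1u := wsf_infix h1 hui
  have h2u := cf_infix h2 hui
  have hlu : (w.take 6).length = 6 := by rw [List.length_take]; omega
  obtain ⟨c0,c1,c2,c3,c4,c5,heq⟩ : ∃ c0 c1 c2 c3 c4 c5 : Fin 2,
      w.take 6 = [c0,c1,c2,c3,c4,c5] := by
    rcases hu : w.take 6 with _|⟨c0,_|⟨c1,_|⟨c2,_|⟨c3,_|⟨c4,_|⟨c5,r⟩⟩⟩⟩⟩⟩ <;>
      rw [hu] at hlu <;> simp_all
  rw [heq] at h1u h2u
  rw [wsf_iff] at h1u
  rw [cf_iff] at h2u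
  exact six c0 c1 c2 c3 c4 c5 ⟨h1u, h2u⟩

lemma key1 : ∀ x : Fin 2, wsfB [x] = true ∧ cfB [x] = true := by decide
lemma key3 : ∀ x : Fin 2, wsfB [x, 1-x, x] = true ∧ cfB [x, 1-x, x] = true := by decide
lemma key5 : ∀ x : Fin 2, cfB [x, 1-x, x, 1-x, x] = true := by decide

theorem stmt15 : ¬ ∃ φ : Fin 2 → List (Fin 2),
    (∀ W, WeakSqFree W → WeakSqFree (applyM φ W)) ∧
    (∀ W, CubeFree W → CubeFree (applyM φ W)) ∧
    (∀ W, OverlapFree W → OverlapFree (applyM φ W)) ∧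
    (∃ (a : Fin 2) (V : List (Fin 2)), φ a = a :: V ∧ V ≠ []) := by
  rintro ⟨φ, hW, hC, -, a, V, hfa, hV⟩
  -- φ a is weakly squarefree
  have hWa : WeakSqFree (φ a) := by
    have := hW [a] (by rw [wsf_iff]; exact (key1 a).1)
    simpa [applyM] using this
  -- apply to [a, 1-a, a]
  have h3 : WeakSqFree (applyM φ [a, 1-a, a]) :=
    hW _ (by rw [wsf_iff]; exact (key3 a).1)
  have h3c : CubeFree (applyM φ [a, 1-a, a]) :=
    hC _ (by rw [cf_iff]; exact (key3 a).2)
  have him : applyM φ [a, 1-a, a] = φ a ++ (φ (1-a) ++ (φ a ++ [])) := by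
    simp [applyM]
  have hlen : (applyM φ [a, 1-a, a]).length ≤ 5 := len_le5 h3 h3c
  rw [him] at hlen
  simp only [List.length_append, List.length_nil] at hlen
  have hfalen : (φ a).length = V.length + 1 := by rw [hfa]; simp
  have hVpos : 1 ≤ V.length := List.length_pos_iff.mpr hV
  have hv1 : V.length = 1 := by omega
  have hblen : (φ (1-a)).length ≤ 1 := by omega
  -- V = [z]
  rcases V with _ | ⟨z, rest⟩
  · simp at hv1
  · have hr : rest = [] := by
      simp only [List.length_cons] at hv1
      exact List.length_eq_zero_iff.mp (by omega)
    subst hr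
    have hza : z ≠ a := fun h =>
      hWa [a, a] (by rw [hfa, h]) ⟨a, [], rfl⟩
    have hz : z = 1 - a := by revert hza; fin_cases a <;> fin_cases z <;> decide
    subst hz
    -- now φ a = [a, 1-a]
    rcases hfb : φ (1-a) with _ | ⟨c, rest2⟩
    · -- φ(1-a) = []; use cubefree on [a,1-a,a,1-a,a]
      have h5 : CubeFree (applyM φ [a, 1-a, a, 1-a, a]) :=
        hC _ (by rw [cf_iff]; exact key5 a)
      have him5 : applyM φ [a, 1-a, a, 1-a, a] = [a, 1-a, a, 1-a, a, 1-a] := by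
        simp [applyM, hfa, hfb]
      rw [him5] at h5
      exact h5 _ (List.infix_refl _) ⟨[a, 1-a], by simp, by simp⟩
    · have hr2 : rest2 = [] := by
        rw [hfb] at hblen
        simp only [List.length_cons] at hblen
        exact List.length_eq_zero_iff.mp (by omega)
      subst hr2
      have hca : c = a ∨ c = 1 - a := by fin_cases a <;> fin_cases c <;> simp
      rw [him] at h3
      rcases hca with h | h <;> rw [h] at hfb
      · -- image is [a,1-a,a,a,1-a], contains [a,a]
        have heq : φ a ++ (φ (1-a) ++ (φ a ++ [])) = [a, 1-a] ++ [a, a] ++ [1-a] := by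
          rw [hfa, hfb]; simp
        rw [heq] at h3
        exact h3 [a, a] ⟨[a, 1-a], [1-a], rfl⟩ ⟨a, [], rfl⟩
      · -- image is [a,1-a,1-a,a,1-a], contains [1-a,1-a]
        have heq : φ a ++ (φ (1-a) ++ (φ a ++ [])) = [a] ++ [1-a, 1-a] ++ [a, 1-a] := by
          rw [hfa, hfb]; simp
        rw [heq] at h3
        exact h3 [1-a, 1-a] ⟨[a], [a, 1-a], rfl⟩ ⟨1-a, [], rfl⟩
end

section
/- Let φ be a uniform squarefree morphism over the ternary alphabet {1,2,3} that is cyclic, i.e., φ(p⊕1) = φ(p)⊕1 for all letters p, where ⊕1 is the cyclic successor 1↦2↦3↦1 applied letterwise. Then for every letter a, the first letter of φ(a) equals the last letter of φ(a). -/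
/-- The cyclic successor 1→2→3→1 on the ternary alphabet is `(· + 1)` on `Fin 3`. -/
theorem stmt16 (φ : Fin 3 → List (Fin 3)) (L : ℕ) (hL : 1 ≤ L)
    (hunif : ∀ a, (φ a).length = L)
    (hcyc : ∀ p : Fin 3, φ (p + 1) = (φ p).map (· + 1))
    (hsf : ∀ W, SqFree W → SqFree (applyM φ W)) :
    ∀ a : Fin 3, (φ a).headI = (φ a).getLastI := by
  have hne : ∀ a, φ a ≠ [] := by
    intro a h
    have := hunif a
    rw [h] at this
    simp at this
    omega
  -- key: for distinct letters, last of φ a ≠ head of φ b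
  have key : ∀ a b : Fin 3, a ≠ b → (φ a).getLastI ≠ (φ b).headI := by
    intro a b hab heq
    have hsfab : SqFree [a, b] := by
      rintro v hv ⟨x, hx, rfl⟩
      have hlen := hv.length_le
      match x, hx with
      | [c], _ =>
        have h2 : [c, c] = [a, b] := hv.sublist.eq_of_length (by simp)
        simp at h2
        exact hab (h2.1.symm.trans h2.2)
      | c :: d :: xs, _ => simp at hlen
    have hmain := hsf _ hsfab
    have happ : applyM φ [a, b] = φ a ++ φ b := by simp [applyM]
    obtain ⟨h', t, hb⟩ := List.exists_cons_of_ne_nil (hne b)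
    have ha : φ a = (φ a).dropLast ++ [(φ a).getLastI] := by
      rw [List.getLastI_eq_getLast?, List.getLast?_eq_getLast (hne a)]
      simp [List.dropLast_append_getLast (hne a)]
    apply hmain [(φ a).getLastI, (φ b).headI]
    · rw [happ]
      refine ⟨(φ a).dropLast, t, ?_⟩
      conv_rhs => rw [ha, hb]
      simp [hb]
    · exact ⟨[(φ a).getLastI], by simp, by rw [heq]; simp⟩
  -- head of φ(a+1) = head(φ a) + 1
  have hhead : ∀ a : Fin 3, (φ (a + 1)).headI = (φ a).headI + 1 := by
    intro a
    obtain ⟨x, xs, hx⟩ := List.exists_cons_of_ne_nil (hne a)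
    rw [hcyc a, hx]
    simp
  have hd1 : ∀ a : Fin 3, a ≠ a + 1 := by decide
  have hd2 : ∀ a : Fin 3, a ≠ a + 1 + 1 := by decide
  intro a
  have k1 := key a (a + 1) (hd1 a)
  have k2 := key a (a + 1 + 1) (hd2 a)
  rw [hhead a] at k1
  rw [hhead (a + 1), hhead a] at k2
  have fin3 : ∀ h l : Fin 3, l ≠ h + 1 → l ≠ h + 1 + 1 → h = l := by decide
  exact fin3 _ _ k1 k2
end

section
/- Every uniform, cyclic, squarefree morphism over the ternary alphabet {1,2,3} is weakly squarefree. -/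
namespace Stmt17Aux

lemma getIdx {α : Type*} (l : List α) {i j : ℕ} (h : i = j) (hb : i < l.length) :
    l[i] = l[j]'(h ▸ hb) := by congr 1

/-- localization of an infix inside a factor of a decomposition -/
lemma loc {α : Type*} {u v y s1 t1 s2 t2 : List α} (h1 : u = s1 ++ v ++ t1)
    (h2 : u = s2 ++ y ++ t2) (hle : s1.length ≤ s2.length)
    (hle2 : s2.length + y.length ≤ s1.length + v.length) : y <:+: v := by
  have hv : v = (u.drop s1.length).take v.length := by
    rw [h1, List.append_assoc, List.drop_append]
    simp
  have hy : y = (u.drop s2.length).take y.length := by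
    rw [h2, List.append_assoc, List.drop_append]
    simp
  set j := s2.length - s1.length with hj
  have hdd : u.drop s2.length = (u.drop s1.length).drop j := by
    rw [List.drop_drop]; congr 1; omega
  have hyv : y = (v.drop j).take y.length := by
    conv_rhs => rw [hv]
    rw [List.drop_take, List.take_take, min_eq_left (by omega), ← hdd, ← hy]
  rw [hyv]
  exact ((List.take_prefix _ _).isInfix).trans (List.drop_suffix _ _).isInfix

lemma getapp {α : Type*} {u s z t : List α} (h : u = s ++ z ++ t) {o : ℕ}
    (ho : o < z.length) (hb : s.length + o < u.length) :
    u[s.length + o] = z[o] := by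
  subst h
  have h1 : s.length + o < (s ++ z).length := by simp; omega
  rw [List.getElem_append_left h1, List.getElem_append_right (by omega)]
  exact getIdx _ (by omega) _

lemma getDapp {α : Type*} (d : α) {u s z t : List α} (h : u = s ++ z ++ t) {o : ℕ}
    (ho : o < z.length) : u.getD (s.length + o) d = z.getD o d := by
  have hb : s.length + o < u.length := by subst h; simp; omega
  rw [List.getD_eq_getElem _ _ hb, List.getD_eq_getElem _ _ ho]
  exact getapp h ho hb

lemma take2_drop {α : Type*} (w : List α) (i : ℕ) (h : i + 1 < w.length) :
    (w.drop i).take 2 = [w[i], w[i+1]] := by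
  apply List.ext_getElem
  · simp; omega
  · intro n h1 h2
    simp only [List.length_take, List.length_drop] at h1
    have hn : n < 2 := by omega
    interval_cases n <;>
      simp [List.getElem_take, List.getElem_drop]

lemma adj_infix {α : Type*} (d : α) (w : List α) (i : ℕ) (h : i + 1 < w.length) :
    [w.getD i d, w.getD (i+1) d] <:+: w := by
  rw [List.getD_eq_getElem _ _ (by omega), List.getD_eq_getElem _ _ h, ← take2_drop w i h]
  exact ((List.take_prefix _ _).isInfix).trans (List.drop_suffix _ _).isInfix

lemma sf3 {α : Type*} (d : α) {w : List α} (hlen : w.length ≤ 3)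
    (hadj : ∀ i, i + 1 < w.length → w.getD i d ≠ w.getD (i+1) d) : SqFree w := by
  rintro v hv ⟨x, hx, rfl⟩
  have hxl : 0 < x.length := List.length_pos_iff.mpr hx
  have hle := hv.length_le
  simp only [List.length_append] at hle
  have : x.length = 1 := by omega
  obtain ⟨c, rfl⟩ := List.length_eq_one_iff.mp this
  obtain ⟨s, t, hst⟩ := hv
  have hw : w = s ++ [c, c] ++ t := by rw [← hst]; rfl
  have hlen2 : s.length + 1 < w.length := by
    rw [hw]; simp only [List.length_append, List.length_cons, List.length_nil]; omega
  have e0 : w.getD s.length d = c := by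
    have := getDapp d hw (o := 0) (by simp)
    simpa using this
  have e1 : w.getD (s.length + 1) d = c := by
    have := getDapp d hw (o := 1) (by simp)
    simpa using this
  exact hadj s.length hlen2 (e0.trans e1.symm)

lemma pairsf {a b : Fin 3} (h : a ≠ b) : SqFree [a, b] := by
  apply sf3 (0 : Fin 3) (by simp)
  intro i hi
  have : i = 0 := by simp at hi; omega
  subst this; simpa

lemma wsq2 {α : Type*} (c : α) : IsWeakSq [c, c] := ⟨c, [], by simp⟩

lemma applyM_cons {α : Type*} (φ : α → List α) (w : α) (W : List α) :
    applyM φ (w :: W) = φ w ++ applyM φ W := rfl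

lemma applyM_append {α : Type*} (φ : α → List α) (u v : List α) :
    applyM φ (u ++ v) = applyM φ u ++ applyM φ v := by
  simp [applyM]

lemma applyM_pair {α : Type*} (φ : α → List α) (x y : α) :
    applyM φ [x, y] = φ x ++ φ y := by
  simp [applyM]


lemma getD_append_left' {α : Type*} (d : α) {l1 l2 : List α} (n : ℕ) (h : n < l1.length) :
    (l1 ++ l2).getD n d = l1.getD n d := by
  rw [List.getD_eq_getElem _ _ (by simp; omega), List.getD_eq_getElem _ _ h,
    List.getElem_append_left h]

lemma getD_append_right' {α : Type*} (d : α) {l1 l2 : List α} (n : ℕ)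
    (h1 : l1.length ≤ n) (h2 : n < l1.length + l2.length) :
    (l1 ++ l2).getD n d = l2.getD (n - l1.length) d := by
  rw [List.getD_eq_getElem _ _ (by simp; omega), List.getD_eq_getElem _ _ (by omega),
    List.getElem_append_right h1]

lemma getD_take_drop {α : Type*} (d : α) (W : List α) (q n i : ℕ) (hi : i < n)
    (h : q + n ≤ W.length) : ((W.drop q).take n).getD i d = W.getD (q+i) d := by
  rw [List.getD_eq_getElem _ _ (by simp; omega), List.getD_eq_getElem _ _ (by omega),
    List.getElem_take, List.getElem_drop]

lemma tdinf {α : Type*} (l : List α) (m n : ℕ) : (l.drop m).take n <:+: l :=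
  ((List.take_prefix _ _).isInfix).trans (List.drop_suffix _ _).isInfix

lemma divL {L : ℕ} (hL : 0 < L) (q o : ℕ) (ho : o < L) : (q * L + o) / L = q := by
  rw [mul_comm, Nat.mul_add_div hL, Nat.div_eq_of_lt ho, add_zero]

lemma modL {L : ℕ} (hL : 0 < L) (q o : ℕ) (ho : o < L) : (q * L + o) % L = o := by
  rw [mul_comm, Nat.mul_add_mod, Nat.mod_eq_of_lt ho]

lemma mkws {α : Type*} (d : α) {W : List α} {q e : ℕ} (hq : 1 ≤ q)
    (hbound : q + 2*e + 1 ≤ W.length)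
    (hper : ∀ i, q ≤ i → i < q + e → W.getD i d = W.getD (i+e) d)
    (hbook : W.getD (q-1) d = W.getD (q+2*e) d) : ¬ WeakSqFree W := by
  intro hW
  set U := (W.drop q).take e with hU
  set b := W.getD (q-1) d with hb
  have hUlen : U.length = e := by rw [hU]; simp; omega
  have hUU : (U ++ U).length = 2*e := by simp [hUlen]; omega
  have hmid : (W.drop (q-1)).take (2*e+2) = b :: (U ++ U ++ [b]) := by
    apply List.ext_getElem
    · simp [hUlen]; omega
    · intro n h1 h2
      simp only [List.length_take, List.length_drop] at h1
      have hn : n < 2*e+2 := by omega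
      have hwn : q - 1 + n < W.length := by omega
      have lhs_eq : ((W.drop (q-1)).take (2*e+2))[n] = W.getD (q-1+n) d := by
        rw [List.getElem_take, List.getElem_drop, ← List.getD_eq_getElem _ d hwn]
      rw [lhs_eq, ← List.getD_eq_getElem _ d h2]
      rcases Nat.eq_zero_or_pos n with hn0 | hn0
      · subst hn0
        simpa using hb.symm
      · obtain ⟨n', rfl⟩ : ∃ n', n = n' + 1 := ⟨n - 1, by omega⟩
        rw [List.getD_cons_succ, show q - 1 + (n'+1) = q + n' by omega]
        by_cases hc1 : n' < e
        · rw [getD_append_left' d n' (by rw [List.length_append, hUlen]; omega),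
            getD_append_left' d n' (by rw [hUlen]; omega), hU,
            getD_take_drop d W q e n' hc1 (by omega)]
        · by_cases hc2 : n' < 2*e
          · rw [getD_append_left' d n' (by rw [List.length_append, hUlen]; omega),
              getD_append_right' d n' (by rw [hUlen]; omega) (by rw [hUlen]; omega)]
            rw [hUlen, hU, getD_take_drop d W q e (n'-e) (by omega) (by omega)]
            have := hper (q + (n' - e)) (by omega) (by omega)
            rw [show q + (n' - e) + e = q + n' by omega] at this
            exact this.symm
          · have hn2 : n' = 2*e := by omega
            subst hn2
            rw [getD_append_right' d _ (by rw [List.length_append, hUlen]; omega)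
              (by rw [List.length_append, hUlen]; simp; omega)]
            rw [List.length_append, hUlen, show 2*e - (e+e) = 0 by omega,
              List.getD_cons_zero]
            exact hbook.symm
  exact hW _ (tdinf W (q-1) (2*e+2)) ⟨b, U, hmid⟩

section Morph
variable {φ : Fin 3 → List (Fin 3)} {L : ℕ}

lemma lenapp (hunif : ∀ a, (φ a).length = L) :
    ∀ W : List (Fin 3), (applyM φ W).length = W.length * L := by
  intro W
  induction W with
  | nil => simp [applyM]
  | cons w W ih => rw [applyM_cons, List.length_append, ih, hunif]; simp; ring

lemma shift (hcyc : ∀ p : Fin 3, φ (p + 1) = (φ p).map (· + 1)) :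
    ∀ c : Fin 3, φ c = (φ 0).map (· + c) := by
  have h1 : φ 1 = (φ 0).map (· + 1) := by
    have := hcyc 0; simpa using this
  have h2 : φ 2 = (φ 0).map (· + 2) := by
    have := hcyc 1
    rw [show (1 : Fin 3) + 1 = 2 by decide] at this
    rw [this, h1, List.map_map]
    congr 1
    funext x
    show x + 1 + 1 = x + 2
    fin_cases x <;> rfl
  intro c
  fin_cases c
  · simp
  · exact h1
  · exact h2

lemma getphiD (hunif : ∀ a, (φ a).length = L)
    (hcyc : ∀ p : Fin 3, φ (p + 1) = (φ p).map (· + 1)) (c : Fin 3) (o : ℕ)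
    (ho : o < L) : (φ c).getD o 0 = c + (φ 0).getD o 0 := by
  have hb : o < (φ 0).length := by rw [hunif 0]; exact ho
  have hb2 : o < (φ c).length := by rw [hunif c]; exact ho
  rw [List.getD_eq_getElem _ _ hb, List.getD_eq_getElem _ _ hb2]
  have := shift hcyc c
  simp only [List.getElem_of_eq this hb2, List.getElem_map]
  rw [add_comm]

lemma val_formula (hunif : ∀ a, (φ a).length = L)
    (hcyc : ∀ p : Fin 3, φ (p + 1) = (φ p).map (· + 1))
    (W : List (Fin 3)) (t : ℕ) (ht : t < W.length * L) :
    (applyM φ W).getD t 0 = W.getD (t / L) 0 + (φ 0).getD (t % L) 0 := by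
  have hL : 0 < L := by
    rcases Nat.eq_zero_or_pos L with h | h
    · rw [h, mul_zero] at ht; omega
    · exact h
  induction W generalizing t with
  | nil => simp at ht
  | cons w W ih =>
    rw [applyM_cons]
    by_cases hlt : t < L
    · have hd : t / L = 0 := Nat.div_eq_of_lt hlt
      have hm : t % L = t := Nat.mod_eq_of_lt hlt
      rw [hd, hm]
      have hb : t < (φ w).length := by rw [hunif]; exact hlt
      rw [List.getD_eq_getElem (φ w ++ applyM φ W) 0 (by simp; omega),
        List.getElem_append_left hb]
      rw [← List.getD_eq_getElem _ _ hb]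
      simpa using getphiD hunif hcyc w t hlt
    · push_neg at hlt
      have ht' : t - L < W.length * L := by
        simp only [List.length_cons] at ht
        have : (W.length + 1) * L = W.length * L + L := by ring
        omega
      have hb : t < (φ w ++ applyM φ W).length := by
        simp only [List.length_append, lenapp hunif, hunif]
        simp only [List.length_cons] at ht
        have : (W.length + 1) * L = W.length * L + L := by ring
        omega
      have hb2 : t - L < (applyM φ W).length := by rw [lenapp hunif]; exact ht'
      rw [List.getD_eq_getElem _ _ hb, List.getElem_append_right (by rw [hunif]; omega)]
      have e : t - (φ w).length = t - L := by rw [hunif]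
      rw [getIdx _ e, ← List.getD_eq_getElem _ _ hb2, ih (t - L) ht']
      have hdiv : t / L = (t - L) / L + 1 := by
        conv_lhs => rw [show t = (t - L) + L by omega]
        rw [Nat.add_div_right _ hL]
      have hmod : t % L = (t - L) % L := by
        conv_lhs => rw [show t = (t - L) + L by omega]
        rw [Nat.add_mod_right]
      rw [hdiv, hmod, List.getD_cons_succ]

lemma k_sqfree (hsf : ∀ W, SqFree W → SqFree (applyM φ W)) : SqFree (φ 0) := by
  have h0 : SqFree [(0 : Fin 3)] := sf3 (0:Fin 3) (by simp) (by intro i hi; simp at hi)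
  have := hsf [0] h0
  rwa [show applyM φ [(0 : Fin 3)] = φ 0 from by simp [applyM]] at this

lemma kadj (hunif : ∀ a, (φ a).length = L) (hsf : ∀ W, SqFree W → SqFree (applyM φ W))
    (o : ℕ) (ho : o + 1 < L) : (φ 0).getD o 0 ≠ (φ 0).getD (o+1) 0 := by
  intro heq
  have hb : o + 1 < (φ 0).length := by rw [hunif 0]; omega
  exact k_sqfree hsf _ (adj_infix 0 (φ 0) o hb)
    ⟨[(φ 0).getD o 0], by simp, by rw [← heq]; rfl⟩

lemma wadj {α : Type*} (d : α) {W : List α} (hW : WeakSqFree W) (i : ℕ)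
    (hi : i + 1 < W.length) : W.getD i d ≠ W.getD (i+1) d := by
  intro heq
  refine hW _ (adj_infix d W i hi) ⟨W.getD i d, [], ?_⟩
  rw [show ([] : List α) ++ [] ++ [W.getD i d] = [W.getD i d] from rfl, ← heq]

lemma k0L (hunif : ∀ a, (φ a).length = L)
    (hcyc : ∀ p : Fin 3, φ (p + 1) = (φ p).map (· + 1))
    (hsf : ∀ W, SqFree W → SqFree (applyM φ W)) (hL : 0 < L) :
    (φ 0).getD 0 0 = (φ 0).getD (L-1) 0 := by
  by_contra h
  set c0 := (φ 0).getD 0 0 with hc0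
  set c1 := (φ 0).getD (L-1) 0 with hc1
  have hb0 : (0 : Fin 3) ≠ c1 - c0 := by
    intro hh
    exact h (sub_eq_zero.mp hh.symm).symm
  have hsq : SqFree (applyM φ [0, c1 - c0]) := hsf _ (pairsf hb0)
  have hlen : (applyM φ [0, c1 - c0]).length = 2 * L := by
    rw [lenapp hunif]; simp [mul_comm]
  have e1 : (applyM φ [0, c1 - c0]).getD (L-1) 0 = c1 := by
    rw [val_formula hunif hcyc _ _ (by simp; omega),
      Nat.div_eq_of_lt (by omega), Nat.mod_eq_of_lt (by omega)]
    simp [hc1]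
  have e2 : (applyM φ [0, c1 - c0]).getD (L-1+1) 0 = c1 := by
    rw [show L - 1 + 1 = L by omega,
      val_formula hunif hcyc _ _ (by simp; omega), Nat.div_self hL, Nat.mod_self]
    show ([(0:Fin 3), c1 - c0]).getD 1 0 + c0 = c1
    simp only [List.getD_cons_succ, List.getD_cons_zero]
    exact sub_add_cancel c1 c0
  exact hsq _ (adj_infix 0 _ (L-1) (by rw [hlen]; omega)) ⟨[c1], by simp, by rw [e1, e2]; rfl⟩

lemma sync (hunif : ∀ a, (φ a).length = L)
    (hcyc : ∀ p : Fin 3, φ (p + 1) = (φ p).map (· + 1))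
    (hsf : ∀ W, SqFree W → SqFree (applyM φ W)) (c x y : Fin 3) (j : ℕ)
    (hj1 : 1 ≤ j) (hj2 : j < L) (hxy : x ≠ y)
    (H1 : ∀ o, o < L - j → x + (φ 0).getD (j+o) 0 = c + (φ 0).getD o 0)
    (H2 : ∀ o, o < j → y + (φ 0).getD o 0 = c + (φ 0).getD (L-j+o) 0) : False := by
  by_cases hxc : x = c
  · -- use H2 : (φ y).take j = (φ c).drop (L-j)
    subst hxc
    have key : (φ y).take j = (φ x).drop (L-j) := by
      apply List.ext_getElem
      · simp [hunif]; omega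
      · intro n h1 h2
        simp only [List.length_take, List.length_drop, hunif] at h1
        have hn : n < j := by omega
        rw [List.getElem_take, List.getElem_drop]
        rw [← List.getD_eq_getElem _ 0 (by rw [hunif]; omega),
          ← List.getD_eq_getElem _ 0 (by rw [hunif]; omega)]
        rw [getphiD hunif hcyc y n (by omega), getphiD hunif hcyc x (L-j+n) (by omega)]
        exact H2 n hn
    have hP : (φ x).drop (L-j) ≠ [] := by
      have hh : ((φ x).drop (L-j)).length = j := by simp [hunif]; omega
      intro h; rw [h] at hh; simp at hh; omega
    apply hsf [x, y] (pairsf (fun h => hxy h)) ((φ x).drop (L-j) ++ (φ x).drop (L-j))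
    · refine ⟨(φ x).take (L-j), (φ y).drop j, ?_⟩
      rw [applyM_pair]
      conv_rhs => rw [← List.take_append_drop (L-j) (φ x), ← List.take_append_drop j (φ y), key]
      simp only [List.append_assoc]
    · exact ⟨(φ x).drop (L-j), hP, rfl⟩
  · -- use H1 : (φ x).drop j = (φ c).take (L-j)
    have key : (φ x).drop j = (φ c).take (L-j) := by
      apply List.ext_getElem
      · simp [hunif]
      · intro n h1 h2
        simp only [List.length_drop, hunif] at h1
        have hn : n < L - j := by omega
        rw [List.getElem_take, List.getElem_drop]
        rw [← List.getD_eq_getElem _ 0 (by rw [hunif]; omega),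
          ← List.getD_eq_getElem _ 0 (by rw [hunif]; omega)]
        rw [getphiD hunif hcyc x (j+n) (by omega), getphiD hunif hcyc c n (by omega)]
        exact H1 n hn
    have hP : (φ x).drop j ≠ [] := by
      have hh : ((φ x).drop j).length = L - j := by simp [hunif]
      intro h; rw [h] at hh; simp at hh; omega
    apply hsf [x, c] (pairsf hxc) ((φ x).drop j ++ (φ x).drop j)
    · refine ⟨(φ x).take j, (φ c).drop (L-j), ?_⟩
      rw [applyM_pair]
      conv_rhs => rw [← List.take_append_drop j (φ x), ← List.take_append_drop (L-j) (φ c), ← key]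
      simp only [List.append_assoc]
    · exact ⟨(φ x).drop j, hP, rfl⟩

end Morph
end Stmt17Aux

open Stmt17Aux in
theorem stmt17 (φ : Fin 3 → List (Fin 3)) (L : ℕ)
    (hunif : ∀ a, (φ a).length = L)
    (hcyc : ∀ p : Fin 3, φ (p + 1) = (φ p).map (· + 1))
    (hsf : ∀ W, SqFree W → SqFree (applyM φ W)) :
    ∀ W, WeakSqFree W → WeakSqFree (applyM φ W) := by
  intro W hW v hv hws
  obtain ⟨a, X, rfl⟩ := hws
  obtain ⟨s0, t0, happ⟩ := hv
  set u := applyM φ W with hu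
  set ρ := X.length with hrho
  set P := s0.length with hPdef
  have hulen : u.length = W.length * L := lenapp hunif W
  have hlen2 : P + (2*ρ + 2) + t0.length = W.length * L := by
    have hcl := congrArg List.length happ
    simp only [List.length_append, List.length_cons, List.length_nil] at hcl
    omega
  have hL : 0 < L := by
    rcases Nat.eq_zero_or_pos L with h | h
    · exfalso; rw [h, mul_zero] at hlen2; omega
    · exact h
  have hbound : P + 2*ρ + 1 < W.length * L := by omega
  have hkadj : ∀ o, o + 1 < L → (φ 0).getD o 0 ≠ (φ 0).getD (o+1) 0 := kadj hunif hsf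
  have hk0L := k0L hunif hcyc hsf hL
  have hwadj : ∀ i, i + 1 < W.length → W.getD i 0 ≠ W.getD (i+1) 0 :=
    fun i hi => wadj 0 hW i hi
  have valq : ∀ q o, o < L → q*L + o < W.length * L →
      u.getD (q*L + o) 0 = W.getD q 0 + (φ 0).getD o 0 := by
    intro q o ho ht
    rw [hu, val_formula hunif hcyc W _ ht, divL hL q o ho, modL hL q o ho]
  have qlt : ∀ q o, q*L + o < W.length * L → q < W.length := by
    intro q o h
    by_contra hc
    push_neg at hc
    have := Nat.mul_le_mul_right L hc
    omega
  have hZ : ∀ o, o < 2*ρ+2 → u.getD (P + o) 0 = (a :: (X ++ X ++ [a])).getD o 0 := by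
    intro o ho
    exact getDapp 0 happ.symm (by simp; omega)
  have EA : u.getD P 0 = a := by
    have h := hZ 0 (by omega)
    rw [Nat.add_zero] at h
    simpa using h
  have EB : u.getD (P + 2*ρ + 1) 0 = a := by
    have h := hZ (2*ρ+1) (by omega)
    rw [show P + 2*ρ + 1 = P + (2*ρ+1) by omega, h, List.getD_cons_succ,
      getD_append_right' 0 _ (by simp; omega) (by simp; omega), List.length_append,
      show 2*ρ - (X.length + X.length) = 0 by omega, List.getD_cons_zero]
  have Eper : ∀ j, j < ρ → u.getD (P + 1 + j) 0 = u.getD (P + 1 + ρ + j) 0 := by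
    intro j hj
    have h1 := hZ (j+1) (by omega)
    have h2 := hZ (ρ+j+1) (by omega)
    rw [show P + (j+1) = P + 1 + j by omega] at h1
    rw [show P + (ρ+j+1) = P + 1 + ρ + j by omega] at h2
    rw [h1, h2, List.getD_cons_succ, List.getD_cons_succ,
      getD_append_left' 0 j (by simp; omega), getD_append_left' 0 j (by omega),
      getD_append_left' 0 (ρ+j) (by simp; omega),
      getD_append_right' 0 (ρ+j) (by omega) (by omega),
      show ρ + j - X.length = j by omega]
  have per : ∀ t, P + 1 ≤ t → t < P + 1 + ρ → u.getD t 0 = u.getD (t + ρ) 0 := by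
    intro t h1 h2
    have h := Eper (t - (P+1)) (by omega)
    rw [show P + 1 + (t - (P+1)) = t by omega,
      show P + 1 + ρ + (t - (P+1)) = t + ρ by omega] at h
    exact h
  obtain ⟨Pq, Po, hPo, hPeq⟩ : ∃ q o, o < L ∧ P = q * L + o :=
    ⟨P / L, P % L, Nat.mod_lt _ hL, by rw [mul_comm]; exact (Nat.div_add_mod P L).symm⟩
  obtain ⟨e, dd, hdd, hred⟩ : ∃ e dd, dd < L ∧ ρ = e * L + dd :=
    ⟨ρ / L, ρ % L, Nat.mod_lt _ hL, by rw [mul_comm]; exact (Nat.div_add_mod ρ L).symm⟩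
  by_cases hd0 : dd = 0
  · subst hd0
    rcases Nat.eq_zero_or_pos e with he0 | he1
    · -- ρ = 0 : two adjacent equal letters in u
      subst he0
      have hρ0 : ρ = 0 := by omega
      have hadj_eq : u.getD P 0 = u.getD (P+1) 0 := by
        rw [EA, show P + 1 = P + 2*ρ + 1 by omega, EB]
      by_cases hPoL : Po = L - 1
      · have e0 : u.getD P 0 = W.getD Pq 0 + (φ 0).getD (L-1) 0 := by
          have h := valq Pq Po hPo (by omega)
          rw [← hPeq] at h
          rw [h, hPoL]
        have e1 : u.getD (P+1) 0 = W.getD (Pq+1) 0 + (φ 0).getD 0 0 := by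
          have hm : (Pq+1)*L = Pq*L + L := by ring
          have h := valq (Pq+1) 0 hL (by omega)
          rw [show (Pq+1)*L + 0 = P + 1 by omega] at h
          exact h
        have hcan : W.getD Pq 0 = W.getD (Pq+1) 0 := by
          have h : W.getD Pq 0 + (φ 0).getD (L-1) 0
              = W.getD (Pq+1) 0 + (φ 0).getD (L-1) 0 := by
            rw [← e0, hadj_eq, e1, hk0L]
          exact add_right_cancel h
        have hm : (Pq+1)*L = Pq*L + L := by ring
        exact hwadj Pq (by have := qlt (Pq+1) 0 (by omega); omega) hcan
      · have hPo1 : Po + 1 < L := by omega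
        have e0 := valq Pq Po hPo (by omega)
        have e1 := valq Pq (Po+1) hPo1 (by omega)
        rw [← hPeq] at e0
        rw [show Pq*L + (Po+1) = P + 1 by omega] at e1
        have h : W.getD Pq 0 + (φ 0).getD Po 0 = W.getD Pq 0 + (φ 0).getD (Po+1) 0 := by
          rw [← e0, ← e1, hadj_eq]
        exact hkadj Po hPo1 (add_left_cancel h)
    · -- ρ = e*L, e ≥ 1
      have heL : L ≤ e*L := Nat.le_mul_of_pos_left L he1
      by_cases hPoL : Po = L - 1
      · -- aligned : weak square in W
        have hqm : (Pq+1) * L = Pq*L + L := by ring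
        have hpq : P + 1 = (Pq+1) * L := by omega
        have h2em : (Pq+1+2*e)*L = (Pq+1)*L + 2*(e*L) := by ring
        have hWgt : Pq + 1 + 2*e < W.length := by
          have := qlt (Pq+1+2*e) 0 (by omega)
          omega
        refine mkws 0 (q := Pq+1) (e := e) (by omega) (by omega) ?_ ?_ hW
        · intro i hi1 hi2
          have hil : (Pq+1)*L ≤ i*L := Nat.mul_le_mul_right L hi1
          have hil2 : i*L < (Pq+1+e)*L := mul_lt_mul_of_pos_right hi2 hL
          have hiem : (Pq+1+e)*L = (Pq+1)*L + e*L := by ring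
          have hp := per (i*L) (by omega) (by omega)
          have hiel : (i+e)*L = i*L + e*L := by ring
          have v1 := valq i 0 hL (by omega)
          have v2 := valq (i+e) 0 hL (by omega)
          rw [Nat.add_zero] at v1
          rw [show (i+e)*L + 0 = i*L + ρ by omega] at v2
          exact add_right_cancel (v1.symm.trans (hp.trans v2))
        · have b0 : u.getD P 0 = W.getD Pq 0 + (φ 0).getD (L-1) 0 := by
            have h := valq Pq Po hPo (by omega)
            rw [← hPeq] at h
            rw [h, hPoL]
          have b1 : u.getD (P + 2*ρ + 1) 0 = W.getD (Pq+1+2*e) 0 + (φ 0).getD 0 0 := by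
            have h := valq (Pq+1+2*e) 0 hL (by omega)
            rw [show (Pq+1+2*e)*L + 0 = P + 2*ρ + 1 by omega] at h
            exact h
          have h : W.getD Pq 0 + (φ 0).getD (L-1) 0
              = W.getD (Pq+1+2*e) 0 + (φ 0).getD (L-1) 0 := by
            rw [← b0, EA, ← EB, b1, hk0L]
          rw [show Pq + 1 - 1 = Pq by omega]
          exact add_right_cancel h
      · -- misaligned, ρ = e*L : adjacent equal letters in k
        have hPo1 : Po + 1 < L := by omega
        have hqem : (Pq+e)*L = Pq*L + e*L := by ring
        have hq2em : (Pq+2*e)*L = Pq*L + 2*(e*L) := by ring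
        have hA1 : W.getD Pq 0 = W.getD (Pq+e) 0 := by
          have hp := per (P+1) (le_refl _) (by omega)
          have v1 := valq Pq (Po+1) hPo1 (by omega)
          have v2 := valq (Pq+e) (Po+1) hPo1 (by omega)
          rw [show Pq*L + (Po+1) = P+1 by omega] at v1
          rw [show (Pq+e)*L + (Po+1) = P+1+ρ by omega] at v2
          exact add_right_cancel (v1.symm.trans (hp.trans v2))
        have hA2 : W.getD (Pq+e) 0 = W.getD (Pq+2*e) 0 := by
          have hp := per ((Pq+e)*L) (by omega) (by omega)
          have v1 := valq (Pq+e) 0 hL (by omega)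
          have v2 := valq (Pq+2*e) 0 hL (by omega)
          rw [Nat.add_zero] at v1
          rw [show (Pq+2*e)*L + 0 = (Pq+e)*L + ρ by omega] at v2
          exact add_right_cancel (v1.symm.trans (hp.trans v2))
        have b0 := valq Pq Po hPo (by omega)
        rw [← hPeq] at b0
        have b1 := valq (Pq+2*e) (Po+1) hPo1 (by omega)
        rw [show (Pq+2*e)*L + (Po+1) = P + 2*ρ + 1 by omega] at b1
        have h : W.getD Pq 0 + (φ 0).getD Po 0 = W.getD Pq 0 + (φ 0).getD (Po+1) 0 := by
          calc W.getD Pq 0 + (φ 0).getD Po 0 = u.getD P 0 := b0.symm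
            _ = u.getD (P + 2*ρ + 1) 0 := by rw [EA, EB]
            _ = W.getD (Pq+2*e) 0 + (φ 0).getD (Po+1) 0 := b1
            _ = W.getD Pq 0 + (φ 0).getD (Po+1) 0 := by rw [← hA2, ← hA1]
        exact hkadj Po hPo1 (add_left_cancel h)
  · -- dd ≠ 0
    have hd1 : 1 ≤ dd := by omega
    have hρpos : 0 < ρ := by omega
    have hi1m : (Pq+1)*L = Pq*L + L := by ring
    have hi1a : P + 1 ≤ (Pq+1) * L := by omega
    have hi1b : (Pq+1) * L ≤ P + L := by omega
    by_cases hA : (Pq+1) * L + L ≤ P + 1 + ρ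
    · -- case A : full block inside first copy
      set i1 := Pq + 1 with hi1def
      have hK : ∀ o, o < L → u.getD (i1*L + ρ + o) 0 = W.getD i1 0 + (φ 0).getD o 0 := by
        intro o ho
        have hp := per (i1*L + o) (by omega) (by omega)
        have v := valq i1 o ho (by omega)
        rw [show i1*L + ρ + o = (i1*L + o) + ρ by omega, ← hp, v]
      set m := i1 + e with hmdef
      have hmm : m*L = i1*L + e*L := by rw [hmdef]; ring
      have hm1m : (m+1)*L = m*L + L := by ring
      have hmeq : ∀ o : ℕ, i1*L + ρ + o = m*L + (dd + o) := by
        intro o; omega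
      have hm1W : m + 1 < W.length := by
        have := qlt (m+1) 0 (by omega)
        omega
      apply sync hunif hcyc hsf (W.getD i1 0) (W.getD m 0) (W.getD (m+1) 0) dd hd1 hdd
        (hwadj m hm1W)
      · intro o ho
        have h := hK o (by omega)
        rw [hmeq o] at h
        have v := valq m (dd+o) (by omega) (by have := hmeq o; omega)
        exact v.symm.trans h
      · intro o ho
        have h := hK (L - dd + o) (by omega)
        rw [hmeq (L - dd + o), show m*L + (dd + (L - dd + o)) = (m+1)*L + o by omega] at h
        have v := valq (m+1) o (by omega) (by omega)
        exact v.symm.trans h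
    · push_neg at hA
      obtain ⟨i2, h2a, h2b, h2c, h2d⟩ : ∃ i2, (P + 1 + ρ ≤ i2 * L) ∧ (i2 * L ≤ P + ρ + L)
          ∧ (e + 1 ≤ i2) ∧ (i2 ≤ Pq + 2) := by
        by_cases hsm : Po + 1 + dd ≤ L
        · have h1 : (Pq+e+1)*L = Pq*L + e*L + L := by ring
          rcases le_or_gt e 1 with he | he
          · exact ⟨Pq + e + 1, by omega, by omega, by omega, by omega⟩
          · exfalso
            have := Nat.mul_le_mul_right L he
            omega
        · rcases Nat.eq_zero_or_pos e with he | he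
          · subst he
            have h1 : (Pq+2)*L = Pq*L + 2*L := by ring
            exact ⟨Pq + 2, by omega, by omega, by omega, by omega⟩
          · exfalso
            have := Nat.le_mul_of_pos_left L he
            omega
      by_cases hB : i2 * L + L ≤ P + 1 + 2*ρ
      · -- case B : full block inside second copy
        set m := i2 - (e+1) with hmdef
        have hmul : m*L = i2*L - (e+1)*L := by rw [hmdef, Nat.sub_mul]
        have he1L : (e+1)*L = e*L + L := by ring
        have he1le : (e+1)*L ≤ i2*L := Nat.mul_le_mul_right L h2c
        have hmeq : m*L + (L - dd) = i2*L - ρ := by omega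
        have hm1m : (m+1)*L = m*L + L := by ring
        have hK : ∀ o, o < L → u.getD (m*L + (L - dd) + o) 0
            = W.getD i2 0 + (φ 0).getD o 0 := by
          intro o ho
          have hp := per (i2*L - ρ + o) (by omega) (by omega)
          have v := valq i2 o ho (by omega)
          rw [show i2*L - ρ + o + ρ = i2*L + o by omega] at hp
          rw [show m*L + (L-dd) + o = i2*L - ρ + o by omega, hp, v]
        have hm1W : m + 1 < W.length := by
          have := qlt (m+1) 0 (by omega)
          omega
        apply sync hunif hcyc hsf (W.getD i2 0) (W.getD m 0) (W.getD (m+1) 0) (L - dd)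
          (by omega) (by omega) (hwadj m hm1W)
        · intro o ho
          have h := hK o (by omega)
          rw [show m*L + (L-dd) + o = m*L + ((L-dd) + o) by omega] at h
          have v := valq m ((L-dd) + o) (by omega) (by omega)
          exact v.symm.trans h
        · intro o ho
          have h := hK (dd + o) (by omega)
          rw [show m*L + (L-dd) + (dd + o) = (m+1)*L + o by omega] at h
          rw [show L - (L - dd) + o = dd + o by omega]
          have v := valq (m+1) o (by omega) (by omega)
          exact v.symm.trans h
      · -- case C : the weak square fits in at most three blocks
        push_neg at hB
        obtain ⟨q, hqa, hqb⟩ : ∃ q, q * L ≤ P + 1 ∧ Pq ≤ q := by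
          by_cases hPoL : Po = L - 1
          · exact ⟨Pq + 1, by omega, by omega⟩
          · exact ⟨Pq, by omega, le_refl _⟩
        have hqLm : Pq*L ≤ q*L := Nat.mul_le_mul_right L hqb
        have hq3m : (q+3)*L = q*L + 3*L := by ring
        have hPq3m : (Pq+3)*L = Pq*L + 3*L := by ring
        have hi2le : i2*L ≤ Pq*L + 2*L := by
          have := Nat.mul_le_mul_right L h2d
          have h1 : (Pq+2)*L = Pq*L + 2*L := by ring
          omega
        have hC : P + 1 + 2*ρ < (q + 3) * L := by omega
        have hqW : q < W.length := qlt q 0 (by omega)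
        set n := min 3 (W.length - q) with hndef
        have hn1 : 1 ≤ n := by omega
        have hn3 : n ≤ 3 := by omega
        have hnq : q + n ≤ W.length := by omega
        set z := (W.drop q).take n with hzdef
        have hzlen : z.length = n := by rw [hzdef]; simp; omega
        have hzadj : ∀ i, i + 1 < z.length → z.getD i 0 ≠ z.getD (i+1) 0 := by
          intro i hi
          rw [hzlen] at hi
          rw [hzdef, getD_take_drop 0 W q n i (by omega) hnq,
            getD_take_drop 0 W q n (i+1) (by omega) hnq,
            show q + (i+1) = (q+i) + 1 by omega]
          exact hwadj (q+i) (by omega)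
        have himg : SqFree (applyM φ z) := hsf z (sf3 0 (by omega) hzadj)
        have hWdec : W = W.take q ++ z ++ W.drop (q+n) := by
          rw [hzdef, List.append_assoc]
          have h1 : (W.drop q).take n ++ W.drop (q+n) = W.drop q := by
            calc (W.drop q).take n ++ W.drop (q+n)
                = (W.drop q).take n ++ (W.drop q).drop n := by rw [List.drop_drop]
              _ = W.drop q := List.take_append_drop n _
          rw [h1]
          exact (List.take_append_drop q W).symm
        have happ2 : u = applyM φ (W.take q) ++ applyM φ z ++ applyM φ (W.drop (q+n)) := by
          have h := congrArg (applyM φ) hWdec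
          rw [applyM_append, applyM_append] at h
          exact hu.trans h
        have hlen_take : (applyM φ (W.take q)).length = q * L := by
          rw [lenapp hunif, List.length_take, min_eq_left (by omega)]
        have hlen_z : (applyM φ z).length = n * L := by rw [lenapp hunif, hzlen]
        have happ3 : u = (s0 ++ [a]) ++ (X ++ X) ++ ([a] ++ t0) := by
          rw [← happ]
          simp [List.append_assoc]
        have hqnm : (q+n)*L = q*L + n*L := by ring
        have hx : P + 1 + 2*ρ ≤ (q+n)*L := by
          rcases le_or_gt 3 (W.length - q) with h | h
          · have hn : n = 3 := by omega
            rw [hn] at hqnm ⊢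
            omega
          · have hn : q + n = W.length := by omega
            have : (q+n)*L = W.length * L := by rw [hn]
            omega
        have hinf : (X ++ X) <:+: applyM φ z := by
          apply loc happ2 happ3
          · rw [hlen_take]
            simp
            omega
          · rw [hlen_take, hlen_z]
            simp
            omega
        exact himg (X ++ X) hinf ⟨X, List.length_pos_iff.mp (by omega), rfl⟩
end

section
/- Every squarefree word over the ternary alphabet {a,b,c} of length greater than 13 contains all six two-letter factors of distinct letters: ab, ac, ba, bc, ca, cb. Moreover, there exists a squarefree word of length 13 (namely bcbacbcacbaca) avoiding the factor ab. -/
/-- checks whether `r` has a square prefix -/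
def sq1 (r : List (Fin 3)) : Bool :=
  (List.range' 1 (r.length / 2)).any fun k => decide (r.take k = (r.drop k).take k)

lemma sq1_true {r : List (Fin 3)} (h : sq1 r = true) :
    ∃ x : List (Fin 3), x ≠ [] ∧ x ++ x <+: r := by
  rw [sq1, List.any_eq_true] at h
  obtain ⟨k, hk, he⟩ := h
  rw [List.mem_range'] at hk
  obtain ⟨i, hi1, hi2⟩ := hk
  have he' : r.take k = (r.drop k).take k := of_decide_eq_true he
  have h2k : 2 * k ≤ r.length := by
    have := Nat.div_mul_le_self r.length 2
    omega
  refine ⟨r.take k, ?_, ?_⟩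
  · intro hn
    have h3 := congrArg List.length hn
    rw [List.length_take, List.length_nil] at h3
    omega
  · have h4 : r.take (k + k) = r.take k ++ (r.drop k).take k := List.take_add
    rw [← he'] at h4
    rw [← h4]
    exact List.take_prefix _ _

lemma sq1_false {x r : List (Fin 3)} (hx : x ≠ []) (hp : x ++ x <+: r) : sq1 r = true := by
  rw [sq1, List.any_eq_true]
  set k := x.length with hk
  have hk1 : 1 ≤ k := by
    cases x with
    | nil => exact absurd rfl hx
    | cons a t => simp [hk]
  have hlen : 2 * k ≤ r.length := by
    have := hp.length_le
    simp at this
    omega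
  refine ⟨k, ?_, ?_⟩
  · rw [List.mem_range']
    exact ⟨k - 1, by omega, by omega⟩
  · have heq : r.take (k + k) = x ++ x := by
      have h5 := List.prefix_iff_eq_take.mp hp
      rw [List.length_append, ← hk] at h5
      exact h5.symm
    have h1 : r.take k = x := by
      have h6 : (r.take (k + k)).take k = r.take k := by
        rw [List.take_take]; congr 1; omega
      rw [← h6, heq]
      simp [hk]
    have h2 : (r.drop k).take k = x := by
      have h7 : (r.take (k + k)).drop k = (r.drop k).take (k + k - k) := List.drop_take ..
      rw [heq] at h7
      simp [hk] at h7
      rw [← hk] at h7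
      exact h7.symm
    exact decide_eq_true (h1.trans h2.symm)

def good (r : List (Fin 3)) : Bool :=
  decide (∀ u v : Fin 3, u ≠ v → [u, v] <:+: r.reverse)

def search : Nat → List (Fin 3) → Bool
  | 0, r => good r
  | n+1, r => (List.finRange 3).all fun c => sq1 (c :: r) || search n (c :: r)

lemma sqfree_infix {α : Type*} {v w : List α} (h : SqFree w) (hi : v <:+: w) : SqFree v :=
  fun u hu => h u (hu.trans hi)

lemma search_spec : ∀ n r, search n r = true →
    ∀ t : List (Fin 3), t.length = n + r.length → r <:+ t → SqFree t.reverse →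
    ∀ u v : Fin 3, u ≠ v → [u, v] <:+: t.reverse := by
  intro n
  induction n with
  | zero =>
    intro r hs t hl hsuf _ u v huv
    have : t = r := (hsuf.eq_of_length (by omega)).symm
    subst this
    exact (of_decide_eq_true hs) u v huv
  | succ n ih =>
    intro r hs t hl hsuf hsf u v huv
    obtain ⟨p, rfl⟩ := hsuf
    have hp : p ≠ [] := by
      intro h; subst h; simp at hl
    obtain ⟨p', c, rfl⟩ := p.eq_nil_or_concat.resolve_left hp
    have hsuf' : (c :: r) <:+ (p'.concat c ++ r) := ⟨p', by simp⟩
    have hmem : (sq1 (c :: r) || search n (c :: r)) = true := by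
      rw [search, List.all_eq_true] at hs
      exact hs c (List.mem_finRange c)
    have hsq : sq1 (c :: r) = false := by
      by_contra h
      rw [Bool.not_eq_false] at h
      obtain ⟨x, hx, hpre⟩ := sq1_true h
      have hinf : x.reverse ++ x.reverse <:+: (p'.concat c ++ r).reverse := by
        have h1 : (x ++ x).reverse <:+ (c :: r).reverse := hpre.reverse
        have h2 : (c :: r).reverse <:+: (p'.concat c ++ r).reverse :=
          (List.reverse_prefix.mpr hsuf').isInfix
        rw [List.reverse_append] at h1
        exact h1.isInfix.trans h2
      exact hsf _ hinf ⟨x.reverse, by simpa using hx, rfl⟩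
    rw [hsq, Bool.false_or] at hmem
    exact ih (c :: r) hmem _ (by simp at hl ⊢; omega) hsuf' hsf u v huv

lemma search14 : search 14 [] = true := by decide

def hasSq (w : List (Fin 3)) : Bool := (List.range w.length).any fun i => sq1 (w.drop i)

lemma sqFree_of_hasSq_false {w : List (Fin 3)} (h : hasSq w = false) : SqFree w := by
  rintro v ⟨s, t, rfl⟩ ⟨x, hx, rfl⟩
  rw [hasSq, List.any_eq_false] at h
  have hd : (s ++ (x ++ x) ++ t).drop s.length = (x ++ x) ++ t := by
    rw [List.append_assoc, List.drop_left]
  have hi : s.length ∈ List.range (s ++ (x ++ x) ++ t).length := by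
    rw [List.mem_range]
    simp
    cases x with
    | nil => exact absurd rfl hx
    | cons a y => simp
  have h9 := h _ hi
  rw [hd] at h9
  exact h9 (sq1_false hx (List.prefix_append _ _))


/-- Letters: a = 0, b = 1, c = 2.  The word bcbacbcacbaca is
[1,2,1,0,2,1,2,0,2,1,0,2,0]. -/
theorem stmt18 :
    (∀ w : List (Fin 3), SqFree w → 13 < w.length →
      ∀ u v : Fin 3, u ≠ v → [u, v] <:+: w) ∧
    (SqFree ([1,2,1,0,2,1,2,0,2,1,0,2,0] : List (Fin 3)) ∧
      ([1,2,1,0,2,1,2,0,2,1,0,2,0] : List (Fin 3)).length = 13 ∧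
      ¬ ([0,1] : List (Fin 3)) <:+: [1,2,1,0,2,1,2,0,2,1,0,2,0]) := by
  refine ⟨?_, sqFree_of_hasSq_false (by decide), by decide, by decide⟩
  intro w hsf hlen u v huv
  have hp : w.take 14 <+: w := List.take_prefix _ _
  have hsfp : SqFree (w.take 14) := sqfree_infix hsf hp.isInfix
  have hres := search_spec 14 [] search14 (w.take 14).reverse
    (by simp; omega) List.nil_suffix
    (by rw [List.reverse_reverse]; exact hsfp) u v huv
  rw [List.reverse_reverse] at hres
  exact hres.trans hp.isInfix
end
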